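/- arXiv:1412.6147 — 6 statements merged into one kernel-verified Lean document; each statement's English description precedes it below -/
import Mathlib

section
/- Let G be a cubic (3-regular) graph with girth g. Then λ₂(G) ≤ 3 − 2√2·cos(π/⌊g/2⌋). -/
open scoped Classical

/-- The algebraic connectivity of a graph `G` on a finite vertex set:
`λ₂ = min` over nonzero `x` with `∑ x i = 0` of the Rayleigh quotient
`(∑_{(i,j)∈E} (x i - x j)²) / (∑ i, x i ²)`.  The double sum over ordered
adjacent pairs counts every edge twice, whence the division by `2`. -/
noncomputable def algConn (V : Type*) [Fintype V] (G : SimpleGraph V) : ℝ :=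
  sInf {r : ℝ | ∃ x : V → ℝ, x ≠ 0 ∧ (∑ i, x i) = 0 ∧
    r = (∑ i, ∑ j, if G.Adj i j then (x i - x j) ^ 2 else 0) /
        (2 * ∑ i, (x i) ^ 2)}

namespace CubicAux

open Real SimpleGraph Finset

noncomputable def ss (θ : ℝ) (i : ℕ) : ℝ :=
  Real.sqrt 2 * Real.sin ((i+1) * θ) + Real.sin (i * θ)

lemma srec (θ x : ℝ) : Real.sin (x + θ) + Real.sin (x - θ) = 2 * Real.cos θ * Real.sin x := by
  rw [Real.sin_add, Real.sin_sub]; ring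

lemma ss_rec (θ : ℝ) (i : ℕ) : ss θ i + ss θ (i+2) = 2 * Real.cos θ * ss θ (i+1) := by
  have A := srec θ (((i:ℝ)+2)*θ)
  have B := srec θ (((i:ℝ)+1)*θ)
  unfold ss
  push_cast
  have e1 : ((i:ℝ)+2)*θ + θ = ((i:ℝ)+2+1)*θ := by ring
  have e2 : ((i:ℝ)+2)*θ - θ = ((i:ℝ)+1)*θ := by ring
  have e3 : ((i:ℝ)+1)*θ + θ = ((i:ℝ)+2)*θ := by ring
  have e4 : ((i:ℝ)+1)*θ - θ = (i:ℝ)*θ := by ring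
  rw [e1, e2] at A
  rw [e3, e4] at B
  have e5 : ((i:ℝ)+1+1)*θ = ((i:ℝ)+2)*θ := by ring
  rw [e5]
  linear_combination Real.sqrt 2 * A + B

noncomputable def cc (k i : ℕ) : ℝ :=
  ((Real.sqrt 2)⁻¹) ^ i * ss (Real.pi / k) i

lemma sqrt2_pos : (0:ℝ) < Real.sqrt 2 := by positivity

lemma sqrt2_sq : Real.sqrt 2 * Real.sqrt 2 = 2 := Real.mul_self_sqrt (by norm_num)

lemma inv_sqrt2_sq : (Real.sqrt 2)⁻¹ * (Real.sqrt 2)⁻¹ = 1/2 := by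
  rw [← mul_inv]; rw [sqrt2_sq]; norm_num

lemma inv_sqrt2 : (Real.sqrt 2)⁻¹ = Real.sqrt 2 / 2 := by
  rw [eq_div_iff (by norm_num : (2:ℝ) ≠ 0), ← sqrt2_sq]
  field_simp
  rw [Real.sqrt_sq (by positivity)]

lemma cc_rec (k i : ℕ) :
    cc k i + 2 * cc k (i+2) = 2 * Real.sqrt 2 * Real.cos (Real.pi / k) * cc k (i+1) := by
  unfold cc
  have h := ss_rec (Real.pi / k) i
  have h1 : (Real.sqrt 2)⁻¹ ^ (i+2) = (Real.sqrt 2)⁻¹ ^ i * (1/2) := by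
    rw [pow_succ, pow_succ, mul_assoc, inv_sqrt2_sq]
  have h2 : (Real.sqrt 2)⁻¹ ^ (i+1) = (Real.sqrt 2)⁻¹ ^ i * (Real.sqrt 2)⁻¹ := by
    rw [pow_succ]
  have h3 : Real.sqrt 2 * (Real.sqrt 2)⁻¹ = 1 := mul_inv_cancel₀ (ne_of_gt sqrt2_pos)
  rw [h1, h2]
  linear_combination ((Real.sqrt 2)⁻¹ ^ i) * h -
    (2 * Real.cos (Real.pi/k) * ss (Real.pi/k) (i+1) * ((Real.sqrt 2)⁻¹ ^ i)) * h3

lemma cc_I1 (m : ℕ) :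
    2 * cc (m+2) 1 - cc (m+2) 0
      = 2 * Real.sqrt 2 * Real.cos (Real.pi/(m+2)) * cc (m+2) 0 := by
  unfold cc ss
  push_cast
  set θ := Real.pi/((m:ℝ)+2) with hθ
  norm_num
  have h2 : Real.sin (2*θ) = 2 * Real.sin θ * Real.cos θ := Real.sin_two_mul θ
  rw [inv_sqrt2]
  rw [h2]
  ring

lemma cc_I3 (m : ℕ) :
    cc (m+2) m - 2 * cc (m+2) (m+1)
      = 2 * Real.sqrt 2 * Real.cos (Real.pi/(m+2)) * cc (m+2) (m+1) := by
  unfold cc ss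
  push_cast
  set θ := Real.pi/((m:ℝ)+2) with hθ
  have hm2 : ((m:ℝ)+2) ≠ 0 := by positivity
  have hπ : ((m:ℝ)+2) * θ = Real.pi := by
    rw [hθ]; field_simp
  have h1 : ((m:ℝ)+1)*θ = Real.pi - θ := by rw [← hπ]; ring
  have h2 : (m:ℝ)*θ = Real.pi - 2*θ := by rw [← hπ]; ring
  have h3 : ((m:ℝ)+1+1)*θ = Real.pi := by rw [← hπ]; ring
  rw [h1, h2, h3, Real.sin_pi, Real.sin_pi_sub, Real.sin_pi_sub, Real.sin_two_mul,
    pow_succ, inv_sqrt2]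
  linear_combination (-(Real.sqrt 2/2)^m * (Real.sin θ * Real.cos θ)) * sqrt2_sq

lemma cc_nonneg (m i : ℕ) (hi : i ≤ m+1) : 0 ≤ cc (m+2) i := by
  unfold cc ss
  set θ := Real.pi/((m:ℕ)+2 : ℕ) with hθ
  have hθpos : 0 < θ := by rw [hθ]; positivity
  have hθπ : ((m:ℝ)+2) * θ = Real.pi := by rw [hθ]; push_cast; field_simp
  have key : ∀ j : ℕ, j ≤ m+2 → 0 ≤ Real.sin (j * θ) := by
    intro j hj
    apply Real.sin_nonneg_of_nonneg_of_le_pi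
    · positivity
    · rw [← hθπ]
      have : (j:ℝ) ≤ (m:ℝ)+2 := by exact_mod_cast hj
      nlinarith
  have k1 := key (i+1) (by omega)
  have k2 := key i (by omega)
  push_cast at k1 k2 ⊢
  have := sqrt2_pos
  positivity

lemma cc0_pos (m : ℕ) : 0 < cc (m+2) 0 := by
  unfold cc ss
  set θ := Real.pi/((m:ℕ)+2 : ℕ) with hθ
  have h1 : 0 < θ := by rw [hθ]; positivity
  have h2 : θ < Real.pi := by
    rw [hθ]; push_cast
    rw [div_lt_iff₀ (by positivity)]
    nlinarith [Real.pi_pos]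
  have hs := Real.sin_pos_of_pos_of_lt_pi h1 h2
  have h3 := sqrt2_pos
  norm_num
  positivity

section Graph

variable {n : ℕ} {G : SimpleGraph (Fin n)}

lemma walk_dist_mem {a b x : Fin n} (p : G.Walk a b) (hx : x ∈ p.support) :
    G.dist a x + G.dist x b ≤ p.length := by
  obtain ⟨q, r, rfl⟩ := Walk.mem_support_iff_exists_append.mp hx
  rw [Walk.length_append]
  exact add_le_add (SimpleGraph.dist_le q) (SimpleGraph.dist_le r)

lemma short_cycle {k : ℕ} (GIRTH : ∀ (a : Fin n) (w : G.Walk a a), w.IsCycle → k ≤ w.length)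
    {a b : Fin n} (hab : G.Adj a b) (W : G.Walk b a) (he : s(a,b) ∉ W.edges) :
    k ≤ W.length + 1 := by
  have hp : W.bypass.IsPath := Walk.bypass_isPath W
  have he' : s(a,b) ∉ W.bypass.edges := fun h => he (Walk.edges_bypass_subset W h)
  have hc : (Walk.cons hab W.bypass).IsCycle := (Walk.cons_isCycle_iff _ hab).mpr ⟨hp, he'⟩
  have h1 := GIRTH a _ hc
  simp only [Walk.length_cons] at h1
  have h2 := Walk.length_bypass_le W
  omega

lemma dist_step {t a b : Fin n} (h : G.Adj a b) (hr : G.Reachable t a) :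
    G.dist t b ≤ G.dist t a + 1 := by
  obtain ⟨p, hp⟩ := hr.exists_walk_length_eq_dist
  have h2 := SimpleGraph.dist_le (p.concat h)
  rwa [Walk.length_concat, hp] at h2

lemma dist_step' {t a b : Fin n} (h : G.Adj t a) (hr : G.Reachable a b) :
    G.dist t b ≤ G.dist a b + 1 := by
  obtain ⟨p, hp⟩ := hr.exists_walk_length_eq_dist
  have h2 := SimpleGraph.dist_le (Walk.cons h p)
  rwa [Walk.length_cons, hp] at h2

lemma exists_parent {a u : Fin n} (h : G.dist a u ≠ 0) :
    ∃ p, G.Adj a p ∧ G.dist p u + 1 = G.dist a u := by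
  obtain ⟨w, hw⟩ := SimpleGraph.exists_walk_of_dist_ne_zero h
  cases w with
  | nil =>
    simp only [Walk.length_nil] at hw
    exact absurd hw.symm h
  | @cons _ b _ hadj w' =>
    refine ⟨b, hadj, ?_⟩
    simp only [Walk.length_cons] at hw
    have h1 : G.dist b u ≤ w'.length := SimpleGraph.dist_le w'
    have hr : G.Reachable b u := ⟨w'⟩
    obtain ⟨q, hq⟩ := hr.exists_walk_length_eq_dist
    have h2 := SimpleGraph.dist_le (Walk.cons hadj q)
    rw [Walk.length_cons, hq] at h2
    omega

end Graph

section Graph2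

variable {n : ℕ} {G : SimpleGraph (Fin n)}

lemma sym2_ne {α : Type*} {a b c d : α} (h1 : a ≠ c) (h2 : a ≠ d) :
    s(a,b) ≠ s(c,d) := by
  intro h
  rw [Sym2.eq_iff] at h
  tauto

lemma sym2_ne' {α : Type*} {a b c d : α} (h1 : b ≠ c) (h2 : b ≠ d) :
    s(a,b) ≠ s(c,d) := by
  intro h
  rw [Sym2.eq_iff] at h
  tauto

lemma edge_not_in_walk {a b x y : Fin n} (p : G.Walk a b)
    (hy : p.length < G.dist a y + G.dist y b) : s(x,y) ∉ p.edges := by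
  intro h
  have hs := walk_dist_mem p (Walk.snd_mem_support_of_mem_edges p h)
  omega

lemma edge_not_in_walk' {a b x y : Fin n} (p : G.Walk a b)
    (hx : p.length < G.dist a x + G.dist x b) : s(x,y) ∉ p.edges := by
  intro h
  have hs := walk_dist_mem p (Walk.fst_mem_support_of_mem_edges p h)
  omega

/-- the test function supported on one side -/
noncomputable def FF (m : ℕ) {n : ℕ} (G : SimpleGraph (Fin n)) (u v w : Fin n) : ℝ :=
  if G.dist w u < G.dist w v ∧ G.dist w u ≤ m + 1 then cc (m+2) (G.dist w u) else 0

lemma FF_nonneg (m : ℕ) (u v w : Fin n) : 0 ≤ FF m G u v w := by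
  unfold FF
  split
  · next h => exact cc_nonneg m _ h.2
  · exact le_refl 0

lemma pervertex (m : ℕ)
    (hcubic : ∀ x, G.degree x = 3)
    (GIRTH : ∀ (a : Fin n) (w : G.Walk a a), w.IsCycle → 2*m+4 ≤ w.length)
    {u v : Fin n} (huv : G.Adj u v) (w : Fin n) :
    2 * Real.sqrt 2 * Real.cos (Real.pi/(m+2)) * (FF m G u v w)^2
      ≤ FF m G u v w * ∑ j, (if G.Adj w j then (FF m G u v j - FF m G v u j) else 0) := by
  classical
  by_cases hw : G.dist w u < G.dist w v ∧ G.dist w u ≤ m + 1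
  swap
  · have h0 : FF m G u v w = 0 := if_neg hw
    rw [h0]; simp
  have hcast : Real.pi / ((m+2:ℕ):ℝ) = Real.pi/((m:ℝ)+2) := by push_cast; ring
  obtain ⟨i, hi⟩ : ∃ i, G.dist w u = i := ⟨_, rfl⟩
  have hwv_ne : G.dist w v ≠ 0 := by omega
  have hwv_reach : G.Reachable w v := SimpleGraph.Reachable.of_dist_ne_zero hwv_ne
  have hwu_reach : G.Reachable w u := hwv_reach.trans huv.symm.reachable
  have hdwv : G.dist w v = i + 1 := by
    have h1 := dist_step huv hwu_reach
    omega
  have hFFw : FF m G u v w = cc (m+2) i := by rw [FF, if_pos hw, hi]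
  rw [hFFw]
  have hsum : ∑ j, (if G.Adj w j then (FF m G u v j - FF m G v u j) else 0)
      = ∑ j ∈ G.neighborFinset w, (FF m G u v j - FF m G v u j) := by
    rw [neighborFinset_eq_filter, Finset.sum_filter]
  rw [hsum]
  rcases Nat.eq_zero_or_pos i with hi0 | hipos
  · -- w = u
    subst hi0
    have hwu : w = u := by
      rcases SimpleGraph.dist_eq_zero_iff_eq_or_not_reachable.mp hi with h | h
      · exact h
      · exact absurd hwu_reach h
    subst hwu
    have hvmem : v ∈ G.neighborFinset w := by rw [mem_neighborFinset]; exact huv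
    rw [← Finset.add_sum_erase _ _ hvmem]
    have hduv : G.dist v w = 1 := SimpleGraph.dist_eq_one_iff_adj.mpr huv.symm
    have hdvv : G.dist v v = 0 := SimpleGraph.dist_self
    have hφv : FF m G w v v - FF m G v w v = - cc (m+2) 0 := by
      have h1 : FF m G w v v = 0 := by
        rw [FF, if_neg]
        rw [hduv, hdvv]; omega
      have h2 : FF m G v w v = cc (m+2) 0 := by
        rw [FF, hdvv, if_pos]
        rw [hduv]; omega
      rw [h1, h2]; ring
    have hothers : ∀ j ∈ (G.neighborFinset w).erase v,
        FF m G w v j - FF m G v w j = cc (m+2) 1 := by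
      intro j hj
      have hne : j ≠ v := Finset.ne_of_mem_erase hj
      have hadj : G.Adj w j := by
        have := Finset.mem_of_mem_erase hj
        rwa [mem_neighborFinset] at this
      have hju : G.dist j w = 1 := SimpleGraph.dist_eq_one_iff_adj.mpr hadj.symm
      have hjr : G.Reachable j w := hadj.symm.reachable
      have hjv2 : G.dist j v = 2 := by
        have hub : G.dist j v ≤ 2 := by
          have := dist_step huv hjr
          omega
        have hne0 : G.dist j v ≠ 0 :=
          SimpleGraph.dist_ne_zero_iff_ne_and_reachable.mpr ⟨hne, hjr.trans huv.reachable⟩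
        have hne1 : G.dist j v ≠ 1 := by
          intro h1
          have hjv : G.Adj j v := SimpleGraph.dist_eq_one_iff_adj.mp h1
          have hW := short_cycle GIRTH huv
            (Walk.cons hjv.symm (Walk.cons hadj.symm Walk.nil)) ?_
          · simp only [Walk.length_cons, Walk.length_nil] at hW
            omega
          · simp only [Walk.edges_cons, Walk.edges_nil, List.mem_cons,
              List.not_mem_nil, or_false]
            push_neg
            exact ⟨sym2_ne huv.ne hadj.ne, sym2_ne' (Ne.symm hne) huv.ne'⟩
        omega
      have h1 : FF m G w v j = cc (m+2) 1 := by
        rw [FF, if_pos, hju]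
        rw [hju, hjv2]; omega
      have h2 : FF m G v w j = 0 := by
        rw [FF, if_neg]
        rw [hju, hjv2]; omega
      rw [h1, h2]; ring
    rw [Finset.sum_congr rfl hothers, Finset.sum_const]
    have hcard : ((G.neighborFinset w).erase v).card = 2 := by
      rw [Finset.card_erase_of_mem hvmem, card_neighborFinset_eq_degree, hcubic]
    rw [hcard, hφv, nsmul_eq_mul]
    have hI1 := cc_I1 m
    have heq : (- cc (m+2) 0 + (2:ℕ) * cc (m+2) 1)
        = 2 * Real.sqrt 2 * Real.cos (Real.pi/(m+2)) * cc (m+2) 0 := by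
      push_cast
      linarith [hI1]
    rw [heq]
    exact le_of_eq (by ring)
  · -- i ≥ 1 : parent exists
    have hine : G.dist w u ≠ 0 := by omega
    obtain ⟨p, hwp, hpu⟩ := exists_parent hine
    rw [hi] at hpu
    have hpw_reach : G.Reachable p w := hwp.symm.reachable
    have hpu_reach : G.Reachable p u := hpw_reach.trans hwu_reach
    have hpv_reach : G.Reachable p v := hpw_reach.trans hwv_reach
    have hpv : i ≤ G.dist p v := by
      have h1 := dist_step' hwp hpv_reach
      omega
    have hpmem : p ∈ G.neighborFinset w := by rw [mem_neighborFinset]; exact hwp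
    have hφp : FF m G u v p - FF m G v u p = cc (m+2) (G.dist p u) := by
      have h1 : FF m G u v p = cc (m+2) (G.dist p u) := by
        rw [FF, if_pos]
        constructor
        · omega
        · omega
      have h2 : FF m G v u p = 0 := by
        rw [FF, if_neg]
        omega
      rw [h1, h2]; ring
    rw [← Finset.add_sum_erase _ _ hpmem, hφp]
    have hcard : ((G.neighborFinset w).erase p).card = 2 := by
      rw [Finset.card_erase_of_mem hpmem, card_neighborFinset_eq_degree, hcubic]
    have hdvu1 : G.dist v u = 1 := SimpleGraph.dist_eq_one_iff_adj.mpr huv.symm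
    rcases Nat.lt_or_ge i (m+1) with him | htop
    · -- interior case 1 ≤ i ≤ m
      have hothers : ∀ j ∈ (G.neighborFinset w).erase p,
          FF m G u v j - FF m G v u j = cc (m+2) (i+1) := by
        intro j hj
        have hjp : j ≠ p := Finset.ne_of_mem_erase hj
        have hadj : G.Adj w j := by
          have := Finset.mem_of_mem_erase hj
          rwa [mem_neighborFinset] at this
        have hjw_reach : G.Reachable j w := hadj.symm.reachable
        have hju_reach : G.Reachable j u := hjw_reach.trans hwu_reach
        have hjv_reach : G.Reachable j v := hjw_reach.trans hwv_reach
        have hjw_ne : G.dist j w ≠ 0 :=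
          SimpleGraph.dist_ne_zero_iff_ne_and_reachable.mpr ⟨Ne.symm hadj.ne, hjw_reach⟩
        have hub : G.dist j u ≤ i + 1 := by
          have := dist_step' hadj.symm hwu_reach
          omega
        have hlb : i ≤ G.dist j u + 1 := by
          have := dist_step' hadj hju_reach
          omega
        have hns : G.dist j u + 1 ≠ i := by
          intro heq
          obtain ⟨P, hP⟩ := hpu_reach.exists_walk_length_eq_dist
          obtain ⟨Q, hQ⟩ := hju_reach.symm.exists_walk_length_eq_dist
          have hedge : s(j,w) ∉ (Walk.cons hwp (P.append Q)).edges := by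
            simp only [Walk.edges_cons, Walk.edges_append, List.mem_cons, List.mem_append]
            push_neg
            refine ⟨sym2_ne (Ne.symm hadj.ne) hjp, ?_, ?_⟩
            · apply edge_not_in_walk
              rw [hP]; omega
            · apply edge_not_in_walk
              rw [hQ]
              have hc1 : G.dist u j = G.dist j u := SimpleGraph.dist_comm
              have hc2 : G.dist u w = G.dist w u := SimpleGraph.dist_comm
              omega
          have hW := short_cycle GIRTH hadj.symm (Walk.cons hwp (P.append Q)) hedge
          simp only [Walk.length_cons, Walk.length_append] at hW
          rw [hP, hQ] at hW
          have hc1 : G.dist u j = G.dist j u := SimpleGraph.dist_comm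
          omega
        have hnsame : G.dist j u ≠ i := by
          intro heq
          obtain ⟨P, hP⟩ := hju_reach.exists_walk_length_eq_dist
          obtain ⟨Q, hQ⟩ := hwu_reach.symm.exists_walk_length_eq_dist
          have hedge : s(w,j) ∉ (P.append Q).edges := by
            simp only [Walk.edges_append, List.mem_append]
            push_neg
            constructor
            · apply edge_not_in_walk'
              rw [hP]
              have hc1 : G.dist j w + G.dist w u ≥ 1 + i := by omega
              omega
            · apply edge_not_in_walk
              rw [hQ]
              have hc1 : G.dist u j = G.dist j u := SimpleGraph.dist_comm
              have hc2 : G.dist u w = G.dist w u := SimpleGraph.dist_comm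
              have hc3 : G.dist j w ≠ 0 := hjw_ne
              omega
          have hW := short_cycle GIRTH hadj (P.append Q) hedge
          simp only [Walk.length_append] at hW
          rw [hP, hQ] at hW
          have hc2 : G.dist u w = G.dist w u := SimpleGraph.dist_comm
          omega
        have hju : G.dist j u = i+1 := by omega
        have hjune : j ≠ u := by
          intro h
          have h0 : G.dist j u = 0 := by rw [h]; exact SimpleGraph.dist_self
          omega
        have hwune : w ≠ u := by
          intro h
          have h0 : G.dist w u = 0 := by rw [h]; exact SimpleGraph.dist_self
          omega
        have hvub : G.dist j v ≤ i + 2 := by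
          have := dist_step' hadj.symm hwv_reach
          omega
        have hvlb : i ≤ G.dist j v := by
          have := dist_step' hadj hjv_reach
          omega
        have hjvne : j ≠ v := by
          intro h
          have h0 : G.dist j v = 0 := by rw [h]; exact SimpleGraph.dist_self
          omega
        have hnB : G.dist j v ≠ i := by
          intro heq
          obtain ⟨P, hP⟩ := hjv_reach.symm.exists_walk_length_eq_dist
          obtain ⟨Q, hQ⟩ := hwu_reach.exists_walk_length_eq_dist
          have hedge : s(u,v) ∉ (P.append (Walk.cons hadj.symm Q)).edges := by
            simp only [Walk.edges_append, Walk.edges_cons, List.mem_append, List.mem_cons]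
            push_neg
            refine ⟨?_, ?_, ?_⟩
            · apply edge_not_in_walk'
              rw [hP]
              have hc1 : G.dist v u = 1 := hdvu1
              have hc2 : G.dist u j = G.dist j u := SimpleGraph.dist_comm
              have hc3 : G.dist v j = G.dist j v := SimpleGraph.dist_comm
              omega
            · exact sym2_ne (Ne.symm hjune) (Ne.symm hwune)
            · apply edge_not_in_walk
              rw [hQ]
              have hc1 : G.dist v u = 1 := hdvu1
              omega
          have hW := short_cycle GIRTH huv (P.append (Walk.cons hadj.symm Q)) hedge
          simp only [Walk.length_append, Walk.length_cons] at hW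
          rw [hP, hQ] at hW
          have hc3 : G.dist v j = G.dist j v := SimpleGraph.dist_comm
          omega
        have hnT : G.dist j v ≠ i+1 := by
          intro heq
          obtain ⟨P, hP⟩ := hjv_reach.symm.exists_walk_length_eq_dist
          obtain ⟨Q, hQ⟩ := hwu_reach.exists_walk_length_eq_dist
          have hedge : s(u,v) ∉ (P.append (Walk.cons hadj.symm Q)).edges := by
            simp only [Walk.edges_append, Walk.edges_cons, List.mem_append, List.mem_cons]
            push_neg
            refine ⟨?_, ?_, ?_⟩
            · apply edge_not_in_walk'
              rw [hP]
              have hc1 : G.dist v u = 1 := hdvu1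
              have hc2 : G.dist u j = G.dist j u := SimpleGraph.dist_comm
              have hc3 : G.dist v j = G.dist j v := SimpleGraph.dist_comm
              omega
            · exact sym2_ne (Ne.symm hjune) (Ne.symm hwune)
            · apply edge_not_in_walk
              rw [hQ]
              have hc1 : G.dist v u = 1 := hdvu1
              omega
          have hW := short_cycle GIRTH huv (P.append (Walk.cons hadj.symm Q)) hedge
          simp only [Walk.length_append, Walk.length_cons] at hW
          rw [hP, hQ] at hW
          have hc3 : G.dist v j = G.dist j v := SimpleGraph.dist_comm
          omega
        have hjv : G.dist j v = i + 2 := by omega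
        have h1 : FF m G u v j = cc (m+2) (i+1) := by
          rw [FF, if_pos, hju]
          rw [hju, hjv]
          omega
        have h2 : FF m G v u j = 0 := by
          rw [FF, if_neg]
          rw [hju, hjv]
          omega
        rw [h1, h2]; ring
      rw [Finset.sum_congr rfl hothers, Finset.sum_const, hcard, nsmul_eq_mul]
      obtain ⟨i0, rfl⟩ : ∃ i0, i = i0 + 1 := ⟨i-1, by omega⟩
      have hpu' : G.dist p u = i0 := by omega
      rw [hpu']
      have hrec := cc_rec (m+2) i0
      rw [hcast] at hrec
      have hidx : i0 + 1 + 1 = i0 + 2 := by omega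
      rw [hidx]
      have heq2 : cc (m+2) i0 + ((2:ℕ):ℝ) * cc (m+2) (i0+2)
          = 2 * Real.sqrt 2 * Real.cos (Real.pi/((m:ℝ)+2)) * cc (m+2) (i0+1) := by
        push_cast
        linarith [hrec]
      rw [heq2]
      exact le_of_eq (by ring)
    · -- top case i = m+1
      have htop' : i = m+1 := by omega
      have hothers : ∀ j ∈ (G.neighborFinset w).erase p,
          -(cc (m+2) (m+1)) ≤ FF m G u v j - FF m G v u j := by
        intro j hj
        have hadj : G.Adj w j := by
          have := Finset.mem_of_mem_erase hj
          rwa [mem_neighborFinset] at this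
        have hjw_reach : G.Reachable j w := hadj.symm.reachable
        have hjv_reach : G.Reachable j v := hjw_reach.trans hwv_reach
        have hA := FF_nonneg (G := G) m u v j
        have hB : FF m G v u j ≤ cc (m+2) (m+1) := by
          by_cases hc : G.dist j v < G.dist j u ∧ G.dist j v ≤ m + 1
          · rw [FF, if_pos hc]
            have hlb : m+1 ≤ G.dist j v := by
              have := dist_step' hadj hjv_reach
              omega
            have hev : G.dist j v = m+1 := by omega
            rw [hev]
          · rw [FF, if_neg hc]
            exact cc_nonneg m _ (le_refl _)
        linarith
      have hsum2 : (2:ℝ) * (-(cc (m+2) (m+1)))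
          ≤ ∑ j ∈ (G.neighborFinset w).erase p, (FF m G u v j - FF m G v u j) := by
        have hle := Finset.sum_le_sum hothers
        rw [Finset.sum_const, hcard, nsmul_eq_mul] at hle
        push_cast at hle
        linarith
      have hpu' : G.dist p u = m := by omega
      rw [hpu', htop']
      have hI3 := cc_I3 m
      have hcc1 : 0 ≤ cc (m+2) (m+1) := cc_nonneg m _ (le_refl _)
      have h5 : cc (m+2) (m+1) * (cc (m+2) m + (2:ℝ)*(-(cc (m+2) (m+1))))
          ≤ cc (m+2) (m+1) * (cc (m+2) m
              + ∑ j ∈ (G.neighborFinset w).erase p, (FF m G u v j - FF m G v u j)) := by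
        apply mul_le_mul_of_nonneg_left _ hcc1
        linarith [hsum2]
      calc 2 * Real.sqrt 2 * Real.cos (Real.pi/(m+2)) * cc (m+2) (m+1) ^ 2
          = cc (m+2) (m+1) * (cc (m+2) m + 2*(-(cc (m+2) (m+1)))) := by
            linear_combination (-(cc (m+2) (m+1))) * hI3
        _ ≤ _ := h5

lemma num_eq (hcubic : ∀ x, G.degree x = 3) (x : Fin n → ℝ) :
    ∑ i, ∑ j, (if G.Adj i j then (x i - x j)^2 else 0)
      = 6 * (∑ i, (x i)^2)
        - 2 * ∑ i, x i * (∑ j, if G.Adj i j then x j else 0) := by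
  classical
  have deg : ∀ i : Fin n, (∑ j, if G.Adj i j then (1:ℝ) else 0) = 3 := by
    intro i
    rw [Finset.sum_boole, ← neighborFinset_eq_filter, card_neighborFinset_eq_degree, hcubic]
    norm_num
  have h1 : ∀ i : Fin n, ∑ j, (if G.Adj i j then (x i - x j)^2 else 0)
      = 3*(x i)^2 + (∑ j, (x j)^2 * (if G.Adj i j then (1:ℝ) else 0))
        - 2 * (x i * (∑ j, if G.Adj i j then x j else 0)) := by
    intro i
    have hsplit : ∀ j, (if G.Adj i j then (x i - x j)^2 else 0)
        = (x i)^2 * (if G.Adj i j then (1:ℝ) else 0)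
          + (x j)^2 * (if G.Adj i j then (1:ℝ) else 0)
          - (2 * x i) * (if G.Adj i j then x j else 0) := by
      intro j; split <;> ring
    rw [Finset.sum_congr rfl (fun j _ => hsplit j), Finset.sum_sub_distrib,
      Finset.sum_add_distrib, ← Finset.mul_sum, ← Finset.mul_sum, deg]
    ring
  rw [Finset.sum_congr rfl (fun i _ => h1 i), Finset.sum_sub_distrib,
    Finset.sum_add_distrib]
  have h2 : ∑ i : Fin n, ∑ j, (x j)^2 * (if G.Adj i j then (1:ℝ) else 0)
      = 3 * ∑ j, (x j)^2 := by
    rw [Finset.sum_comm]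
    have h3 : ∀ j : Fin n, ∑ i, (x j)^2 * (if G.Adj i j then (1:ℝ) else 0)
        = 3 * (x j)^2 := by
      intro j
      rw [← Finset.mul_sum]
      have h4 : (∑ i, if G.Adj i j then (1:ℝ) else 0)
          = (∑ i, if G.Adj j i then (1:ℝ) else 0) := by
        refine Finset.sum_congr rfl fun i _ => ?_
        rw [SimpleGraph.adj_comm]
      rw [h4, deg j]
      ring
    rw [Finset.sum_congr rfl (fun j _ => h3 j), ← Finset.mul_sum]
  rw [h2, ← Finset.mul_sum, ← Finset.mul_sum]
  ring

lemma maincase (m : ℕ)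
    (hcubic : ∀ x, G.degree x = 3)
    (GIRTH : ∀ (a : Fin n) (w : G.Walk a a), w.IsCycle → 2*m+4 ≤ w.length)
    {u v : Fin n} (huv : G.Adj u v) :
    ∃ x : Fin n → ℝ, x ≠ 0 ∧ (∑ i, x i) = 0 ∧
      (∑ i, ∑ j, if G.Adj i j then (x i - x j)^2 else 0) / (2 * ∑ i, (x i)^2)
        ≤ 3 - 2 * Real.sqrt 2 * Real.cos (Real.pi/(m+2)) := by
  classical
  set L : ℝ := 2 * Real.sqrt 2 * Real.cos (Real.pi/(m+2)) with hL
  set fA : Fin n → ℝ := FF m G u v with hfA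
  set fB : Fin n → ℝ := FF m G v u with hfB
  set α : ℝ := ∑ w, fB w with hα
  set β : ℝ := ∑ w, fA w with hβ
  set x : Fin n → ℝ := fun w => α * fA w - β * fB w with hx
  have hduv : G.dist u v = 1 := SimpleGraph.dist_eq_one_iff_adj.mpr huv
  have hdvu : G.dist v u = 1 := SimpleGraph.dist_eq_one_iff_adj.mpr huv.symm
  have hduu : G.dist u u = 0 := SimpleGraph.dist_self
  have hdvv : G.dist v v = 0 := SimpleGraph.dist_self
  have hfAu : fA u = cc (m+2) 0 := by
    rw [hfA, FF, if_pos]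
    · rw [hduu]
    · rw [hduu, hduv]; omega
  have hfBu : fB u = 0 := by
    rw [hfB, FF, if_neg]
    rw [hduu, hduv]; omega
  have hfAv : fA v = 0 := by
    rw [hfA, FF, if_neg]
    rw [hdvv, hdvu]; omega
  have hfBv : fB v = cc (m+2) 0 := by
    rw [hfB, FF, if_pos]
    · rw [hdvv]
    · rw [hdvv, hdvu]; omega
  have hAnn : ∀ w, 0 ≤ fA w := fun w => FF_nonneg m u v w
  have hBnn : ∀ w, 0 ≤ fB w := fun w => FF_nonneg m v u w
  have hαpos : 0 < α := by
    rw [hα]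
    refine Finset.sum_pos' (fun w _ => hBnn w) ⟨v, Finset.mem_univ v, ?_⟩
    rw [hfBv]; exact cc0_pos m
  have hβpos : 0 < β := by
    rw [hβ]
    refine Finset.sum_pos' (fun w _ => hAnn w) ⟨u, Finset.mem_univ u, ?_⟩
    rw [hfAu]; exact cc0_pos m
  have hdisj : ∀ w, fA w * fB w = 0 := by
    intro w
    by_cases hA : G.dist w u < G.dist w v ∧ G.dist w u ≤ m+1
    · have hB0 : fB w = 0 := by
        rw [hfB, FF, if_neg]
        omega
      rw [hB0, mul_zero]
    · have hA0 : fA w = 0 := by rw [hfA, FF, if_neg hA]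
      rw [hA0, zero_mul]
  have hxsum : ∑ i, x i = 0 := by
    simp only [hx]
    rw [Finset.sum_sub_distrib, ← Finset.mul_sum, ← Finset.mul_sum, ← hα, ← hβ]
    ring
  have hxu : x u = α * cc (m+2) 0 := by
    simp only [hx, hfAu, hfBu]
    ring
  have hxupos : 0 < x u := by
    rw [hxu]; exact mul_pos hαpos (cc0_pos m)
  have hxne : x ≠ 0 := by
    intro h
    have h0 : x u = 0 := by rw [h]; rfl
    linarith
  have hx2 : ∀ w, (x w)^2 = α^2 * (fA w)^2 + β^2 * (fB w)^2 := by
    intro w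
    simp only [hx]
    linear_combination (-(2*α*β)) * (hdisj w)
  have hx2sum : ∑ i, (x i)^2 = α^2 * (∑ w, (fA w)^2) + β^2 * (∑ w, (fB w)^2) := by
    rw [Finset.sum_congr rfl (fun w _ => hx2 w), Finset.sum_add_distrib,
      ← Finset.mul_sum, ← Finset.mul_sum]
  have hx2pos : 0 < ∑ i, (x i)^2 := by
    refine Finset.sum_pos' (fun i _ => sq_nonneg _) ⟨u, Finset.mem_univ u, ?_⟩
    exact pow_pos hxupos 2
  -- the four bilinear sums
  set SA : Fin n → ℝ := fun w => ∑ j, if G.Adj w j then fA j else 0 with hSA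
  set SB : Fin n → ℝ := fun w => ∑ j, if G.Adj w j then fB j else 0 with hSB
  set TAA : ℝ := ∑ w, fA w * SA w with hTAA
  set TAB : ℝ := ∑ w, fA w * SB w with hTAB
  set TBA : ℝ := ∑ w, fB w * SA w with hTBA
  set TBB : ℝ := ∑ w, fB w * SB w with hTBB
  have hsymm : TAB = TBA := by
    rw [hTAB, hTBA]
    have e1 : ∀ w, fA w * SB w = ∑ j, (if G.Adj w j then fA w * fB j else 0) := by
      intro w
      rw [hSB, Finset.mul_sum]
      exact Finset.sum_congr rfl fun j _ => by rw [mul_ite, mul_zero]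
    have e2 : ∀ w, fB w * SA w = ∑ j, (if G.Adj w j then fB w * fA j else 0) := by
      intro w
      rw [hSA, Finset.mul_sum]
      exact Finset.sum_congr rfl fun j _ => by rw [mul_ite, mul_zero]
    rw [Finset.sum_congr rfl (fun w _ => e1 w), Finset.sum_congr rfl (fun w _ => e2 w)]
    rw [Finset.sum_comm]
    refine Finset.sum_congr rfl fun w _ => Finset.sum_congr rfl fun j _ => ?_
    rw [SimpleGraph.adj_comm]
    split <;> ring
  have hQnn : 0 ≤ TAB := by
    rw [hTAB]
    refine Finset.sum_nonneg fun w _ => mul_nonneg (hAnn w) ?_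
    rw [hSB]
    refine Finset.sum_nonneg fun j _ => ?_
    split
    · exact hBnn j
    · exact le_rfl
  have hsideA : L * (∑ w, (fA w)^2) ≤ TAA - TAB := by
    have hper := fun w => pervertex m hcubic GIRTH huv w
    have hsum := Finset.sum_le_sum (fun w (_ : w ∈ Finset.univ) => hper w)
    rw [← Finset.mul_sum] at hsum
    have e3 : ∀ w : Fin n, (FF m G u v w) * ∑ j, (if G.Adj w j then (FF m G u v j - FF m G v u j) else 0)
        = fA w * SA w - fA w * SB w := by
      intro w
      have e4 : (∑ j, if G.Adj w j then (FF m G u v j - FF m G v u j) else 0)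
          = SA w - SB w := by
        rw [hSA, hSB, ← Finset.sum_sub_distrib]
        refine Finset.sum_congr rfl fun j _ => ?_
        split <;> simp [hfA, hfB]
      rw [e4, ← hfA]
      ring
    rw [Finset.sum_congr rfl (fun w _ => e3 w), Finset.sum_sub_distrib, ← hTAA, ← hTAB] at hsum
    rw [hL, hfA]
    exact hsum
  have hsideB : L * (∑ w, (fB w)^2) ≤ TBB - TBA := by
    have hper := fun w => pervertex m hcubic GIRTH huv.symm w
    have hsum := Finset.sum_le_sum (fun w (_ : w ∈ Finset.univ) => hper w)
    rw [← Finset.mul_sum] at hsum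
    have e3 : ∀ w : Fin n, (FF m G v u w) * ∑ j, (if G.Adj w j then (FF m G v u j - FF m G u v j) else 0)
        = fB w * SB w - fB w * SA w := by
      intro w
      have e4 : (∑ j, if G.Adj w j then (FF m G v u j - FF m G u v j) else 0)
          = SB w - SA w := by
        rw [hSA, hSB, ← Finset.sum_sub_distrib]
        refine Finset.sum_congr rfl fun j _ => ?_
        split <;> simp [hfA, hfB]
      rw [e4, ← hfB]
      ring
    rw [Finset.sum_congr rfl (fun w _ => e3 w), Finset.sum_sub_distrib, ← hTBB, ← hTBA] at hsum
    rw [hL, hfB]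
    exact hsum
  -- global inequality
  have hinner : ∀ w, (∑ j, if G.Adj w j then x j else 0) = α * SA w - β * SB w := by
    intro w
    rw [hSA, hSB, Finset.mul_sum, Finset.mul_sum, ← Finset.sum_sub_distrib]
    refine Finset.sum_congr rfl fun j _ => ?_
    simp only [hx]
    split <;> ring
  have hP : ∑ w, x w * (∑ j, if G.Adj w j then x j else 0)
      = α^2 * TAA + β^2 * TBB - (α*β) * TAB - (α*β) * TBA := by
    have hterm : ∀ w, x w * (∑ j, if G.Adj w j then x j else 0)
        = α^2 * (fA w * SA w) + β^2 * (fB w * SB w)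
          - (α*β) * (fA w * SB w) - (α*β) * (fB w * SA w) := by
      intro w
      rw [hinner w]
      simp only [hx]
      ring
    rw [Finset.sum_congr rfl (fun w _ => hterm w), Finset.sum_sub_distrib,
      Finset.sum_sub_distrib, Finset.sum_add_distrib, ← Finset.mul_sum, ← Finset.mul_sum,
      ← Finset.mul_sum, ← Finset.mul_sum, ← hTAA, ← hTAB, ← hTBA, ← hTBB]
  have key : L * (∑ i, (x i)^2) ≤ ∑ w, x w * (∑ j, if G.Adj w j then x j else 0) := by
    rw [hP, hx2sum, ← hsymm]
    have h1 := mul_le_mul_of_nonneg_left hsideA (sq_nonneg α)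
    have h2 := mul_le_mul_of_nonneg_left hsideB (sq_nonneg β)
    have h3 := mul_nonneg (sq_nonneg (α-β)) hQnn
    nlinarith [h1, h2, h3]
  refine ⟨x, hxne, hxsum, ?_⟩
  rw [div_le_iff₀ (by linarith [hx2pos] : (0:ℝ) < 2 * ∑ i, (x i)^2)]
  rw [num_eq hcubic x]
  linarith [key]

lemma girth3case (hcubic : ∀ x, G.degree x = 3) {u v : Fin n} (huv : G.Adj u v) :
    ∃ x : Fin n → ℝ, x ≠ 0 ∧ (∑ i, x i) = 0 ∧
      (∑ i, ∑ j, if G.Adj i j then (x i - x j)^2 else 0) / (2 * ∑ i, (x i)^2)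
        ≤ 3 + 2 * Real.sqrt 2 := by
  classical
  set x : Fin n → ℝ := fun t => (if t = u then (1:ℝ) else 0) - (if t = v then 1 else 0) with hx
  have hne : u ≠ v := huv.ne
  have hxu : x u = 1 := by simp [hx, hne]
  have hxv : x v = -1 := by simp [hx, Ne.symm hne]
  have hx0 : ∀ t, t ≠ u → t ≠ v → x t = 0 := by
    intro t h1 h2; simp [hx, h1, h2]
  have hxsum : ∑ i, x i = 0 := by
    simp only [hx]
    rw [Finset.sum_sub_distrib]
    simp [Finset.sum_ite_eq']
  have hxne : x ≠ 0 := by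
    intro h
    have h0 := congrFun h u
    rw [hxu] at h0
    exact one_ne_zero h0
  have hx2 : ∑ i, (x i)^2 = 2 := by
    have hpt : ∀ t : Fin n, (x t)^2
        = (if t = u then (1:ℝ) else 0) + (if t = v then 1 else 0) := by
      intro t
      by_cases h1 : t = u
      · subst h1; rw [hxu]; simp [hne]
      · by_cases h2 : t = v
        · subst h2; rw [hxv]; simp [Ne.symm hne]
        · rw [hx0 t h1 h2]; simp [h1, h2]
    rw [Finset.sum_congr rfl (fun t _ => hpt t), Finset.sum_add_distrib]
    simp [Finset.sum_ite_eq']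
    norm_num
  have hSu : (∑ j, if G.Adj u j then x j else 0) = -1 := by
    have hpt : ∀ j, (if G.Adj u j then x j else 0)
        = (if j = v then (if G.Adj u j then x j else 0) else 0) := by
      intro j
      by_cases h2 : j = v
      · simp [h2]
      · by_cases h1 : j = u
        · subst h1; simp [h2]
        · rw [hx0 j h1 h2]; simp [h2]
    rw [Finset.sum_congr rfl (fun j _ => hpt j), Finset.sum_ite_eq']
    simp [huv, hxv]
  have hSv : (∑ j, if G.Adj v j then x j else 0) = 1 := by
    have hpt : ∀ j, (if G.Adj v j then x j else 0)
        = (if j = u then (if G.Adj v j then x j else 0) else 0) := by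
      intro j
      by_cases h2 : j = u
      · simp [h2]
      · by_cases h1 : j = v
        · subst h1; simp [h2]
        · rw [hx0 j h2 h1]; simp [h2]
    rw [Finset.sum_congr rfl (fun j _ => hpt j), Finset.sum_ite_eq']
    simp [huv.symm, hxu]
  have hP : ∑ t, x t * (∑ j, if G.Adj t j then x j else 0) = -2 := by
    rw [← Finset.sum_subset (Finset.subset_univ ({u, v} : Finset (Fin n)))]
    · rw [Finset.sum_pair hne, hxu, hxv, hSu, hSv]
      norm_num
    · intro t _ ht
      simp only [Finset.mem_insert, Finset.mem_singleton] at ht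
      push_neg at ht
      rw [hx0 t ht.1 ht.2, zero_mul]
  have hnum := num_eq hcubic x
  rw [hx2, hP] at hnum
  refine ⟨x, hxne, hxsum, ?_⟩
  rw [hnum, hx2]
  rw [div_le_iff₀ (by norm_num : (0:ℝ) < 2*2)]
  nlinarith [sqrt2_sq, sqrt2_pos]

end Graph2

end CubicAux

/-- **Theorem (cubic graphs).** A cubic (3-regular) graph of girth `g` has algebraic
connectivity at most `3 - 2√2·cos(π/⌊g/2⌋)`. -/
theorem cubic_algConn_le_girth_bound (n g : ℕ) (G : SimpleGraph (Fin n))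
    (hcubic : ∀ v, G.degree v = 3) (hg : G.egirth = (g : ℕ∞)) :
    algConn (Fin n) G ≤ 3 - 2 * Real.sqrt 2 * Real.cos (Real.pi / (g / 2 : ℕ)) := by
  classical
  have hnotacyclic : ¬ G.IsAcyclic := by
    intro h
    have h2 := SimpleGraph.egirth_eq_top.mpr h
    rw [hg] at h2
    exact (ENat.coe_ne_top g) h2
  obtain ⟨a, wc, hwc, hlen⟩ := SimpleGraph.exists_egirth_eq_length.mpr hnotacyclic
  have hGIRTH : ∀ (b : Fin n) (w : G.Walk b b), w.IsCycle → g ≤ w.length := by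
    intro b w hc
    have h1 : G.egirth ≤ (w.length : ℕ∞) := by
      have h0 : G.egirth ≤ G.egirth := le_refl _
      rw [SimpleGraph.le_egirth] at h0
      exact h0 b w hc
    rw [hg] at h1
    exact_mod_cast h1
  have hg3 : 3 ≤ g := by
    have h3 := SimpleGraph.three_le_egirth (G := G)
    rw [hg] at h3
    exact_mod_cast h3
  obtain ⟨b, hb⟩ : ∃ b, G.Adj a b := by
    have hdeg := hcubic a
    have hpos : 0 < G.degree a := by omega
    exact (SimpleGraph.degree_pos_iff_exists_adj G a).mp hpos
  have hbdd : BddBelow {r : ℝ | ∃ x : Fin n → ℝ, x ≠ 0 ∧ (∑ i, x i) = 0 ∧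
      r = (∑ i, ∑ j, if G.Adj i j then (x i - x j) ^ 2 else 0) /
          (2 * ∑ i, (x i) ^ 2)} := by
    refine ⟨0, ?_⟩
    rintro r ⟨x, -, -, rfl⟩
    apply div_nonneg
    · apply Finset.sum_nonneg
      intro i _
      apply Finset.sum_nonneg
      intro j _
      split
      · exact sq_nonneg _
      · exact le_rfl
    · positivity
  rw [algConn]
  rcases Nat.lt_or_ge g 4 with hg4 | hg4
  · -- g = 3
    have hgeq : g = 3 := by omega
    subst hgeq
    obtain ⟨x, h1, h2, h3⟩ := CubicAux.girth3case hcubic hb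
    refine le_trans (csInf_le hbdd ⟨x, h1, h2, rfl⟩) ?_
    have hc1 : ((3/2 : ℕ) : ℝ) = 1 := by norm_num
    rw [hc1, div_one, Real.cos_pi]
    linarith [h3]
  · -- g ≥ 4
    obtain ⟨m, hm⟩ : ∃ m, g/2 = m + 2 := ⟨g/2 - 2, by omega⟩
    have hG2 : ∀ (b' : Fin n) (w : G.Walk b' b'), w.IsCycle → 2*m+4 ≤ w.length := by
      intro b' w hc
      have h0 := hGIRTH b' w hc
      omega
    obtain ⟨x, h1, h2, h3⟩ := CubicAux.maincase m hcubic hG2 hb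
    refine le_trans (csInf_le hbdd ⟨x, h1, h2, rfl⟩) ?_
    have hc2 : ((g/2 : ℕ) : ℝ) = (m:ℝ) + 2 := by rw [hm]; push_cast; ring
    rw [hc2]
    exact h3
end

section
/- Let T_K be the graph consisting of two disjoint perfect binary trees of height K whose roots are joined by an edge. If a cubic graph G contains T_K as a subgraph, then λ₂(G) ≤ 3 − 2√2·cos(π/K). -/
open scoped Classical

/-- The graph `T_K`: two disjoint perfect binary trees of height `K` (each with
`2^(K+1) - 1` vertices, numbered heap-style so that vertex number `i+1` has children
numbered `2(i+1)` and `2(i+1)+1`, the root having number `1`), together with an edge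
joining the two roots. -/
def TK (K : ℕ) : SimpleGraph (Bool × Fin (2 ^ (K + 1) - 1)) :=
  SimpleGraph.fromRel (fun a b =>
    (a.1 = b.1 ∧ ((b.2 : ℕ) + 1 = 2 * ((a.2 : ℕ) + 1) ∨
                  (b.2 : ℕ) + 1 = 2 * ((a.2 : ℕ) + 1) + 1)) ∨
    ((a.2 : ℕ) = 0 ∧ (b.2 : ℕ) = 0 ∧ a.1 ≠ b.1))

open Finset Real

section Master
variable (K : ℕ)

/-- child relation -/
def Child (p q : Bool × Fin (2 ^ (K + 1) - 1)) : Prop :=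
  p.1 = q.1 ∧ ((q.2 : ℕ) + 1 = 2 * ((p.2 : ℕ) + 1) ∨ (q.2 : ℕ) + 1 = 2 * ((p.2 : ℕ) + 1) + 1)

def Cross (p q : Bool × Fin (2 ^ (K + 1) - 1)) : Prop :=
  (p.2 : ℕ) = 0 ∧ (q.2 : ℕ) = 0 ∧ p.1 ≠ q.1

lemma adj_iff (p q : Bool × Fin (2 ^ (K + 1) - 1)) :
    (TK K).Adj p q ↔ (Child K p q ∨ Child K q p ∨ Cross K p q) := by
  rw [TK, SimpleGraph.fromRel_adj]
  constructor
  · rintro ⟨hne, h⟩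
    rcases h with (⟨h1, h2⟩ | ⟨h1, h2, h3⟩) | (⟨h1, h2⟩ | ⟨h1, h2, h3⟩)
    · exact Or.inl ⟨h1, h2⟩
    · exact Or.inr (Or.inr ⟨h1, h2, h3⟩)
    · exact Or.inr (Or.inl ⟨h1, h2⟩)
    · exact Or.inr (Or.inr ⟨h2, h1, h3.symm⟩)
  · rintro (⟨h1, h2⟩ | ⟨h1, h2⟩ | ⟨h1, h2, h3⟩)
    · refine ⟨?_, Or.inl (Or.inl ⟨h1, h2⟩)⟩
      intro hpq; rw [hpq] at h2; omega
    · refine ⟨?_, Or.inr (Or.inl ⟨h1, h2⟩)⟩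
      intro hpq; rw [hpq] at h2; omega
    · refine ⟨?_, Or.inl (Or.inr ⟨h1, h2, h3⟩)⟩
      intro hpq; rw [hpq] at h3; exact h3 rfl

lemma child_not_child {p q : Bool × Fin (2 ^ (K + 1) - 1)} (h : Child K p q) :
    ¬ Child K q p := by
  rintro ⟨h1, h2⟩; rcases h with ⟨h3, h4⟩; omega

lemma child_not_cross {p q : Bool × Fin (2 ^ (K + 1) - 1)} (h : Child K p q) :
    ¬ Cross K p q := by
  rintro ⟨h1, h2, h3⟩; rcases h with ⟨h4, h5⟩; omega

lemma child_rev_not_cross {p q : Bool × Fin (2 ^ (K + 1) - 1)} (h : Child K q p) :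
    ¬ Cross K p q := by
  rintro ⟨h1, h2, h3⟩; rcases h with ⟨h4, h5⟩; omega

end Master
section
variable (K n : ℕ)

-- numeric helpers
lemma pow_help (hK : 1 ≤ K) : 2 ^ K + 2 ^ K = 2 ^ (K+1) ∧ 2 ≤ 2 ^ K := by
  constructor
  · rw [pow_succ]; ring
  · calc 2 = 2^1 := rfl
    _ ≤ 2^K := Nat.pow_le_pow_right (by norm_num) hK

-- depth facts
lemma dep_le (hK : 1 ≤ K) (i : Fin (2 ^ (K + 1) - 1)) :
    Nat.log 2 ((i : ℕ) + 1) ≤ K := by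
  have h1 : (i : ℕ) + 1 < 2 ^ (K + 1) := by
    have := i.isLt; omega
  have := (Nat.log_lt_iff_lt_pow (by norm_num) (by omega : (i:ℕ)+1 ≠ 0)).mpr h1
  omega

lemma dep_lt_iff (i : Fin (2 ^ (K + 1) - 1)) :
    Nat.log 2 ((i : ℕ) + 1) < K ↔ (i : ℕ) + 1 < 2 ^ K :=
  (Nat.log_lt_iff_lt_pow (by norm_num) (by omega : (i:ℕ)+1 ≠ 0))

lemma dep_child (m : ℕ) (hm : 1 ≤ m) (m' : ℕ) (hm' : m' = 2*m ∨ m' = 2*m+1) :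
    Nat.log 2 m' = Nat.log 2 m + 1 := by
  have h1 : 2 ^ Nat.log 2 m ≤ m := Nat.pow_log_le_self 2 (by omega)
  have h2 : m < 2 ^ (Nat.log 2 m + 1) := Nat.lt_pow_succ_log_self (by norm_num) m
  apply Nat.log_eq_of_pow_le_of_lt_pow
  · rw [pow_succ]; omega
  · rw [pow_succ, pow_succ]; omega
end

section Deg
variable {K n : ℕ}

lemma neighbors_of_internal (hK : 1 ≤ K) {G : SimpleGraph (Fin n)}
    (hcubic : ∀ v, G.degree v = 3)
    {f : Bool × Fin (2 ^ (K + 1) - 1) → Fin n} (hinj : Function.Injective f)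
    (hhom : ∀ a b, (TK K).Adj a b → G.Adj (f a) (f b))
    (p : Bool × Fin (2 ^ (K + 1) - 1)) (hp : (p.2 : ℕ) + 1 < 2 ^ K)
    (j : Fin n) (hj : G.Adj (f p) j) :
    ∃ q, (TK K).Adj p q ∧ f q = j := by
  obtain ⟨hpow, h2K⟩ := pow_help K hK
  set m : ℕ := (p.2 : ℕ) + 1 with hm
  have hm1 : 1 ≤ m := by omega
  have hNN : 2 * m + 1 ≤ 2 ^ (K + 1) - 1 := by omega
  -- the two children
  set q1 : Bool × Fin (2 ^ (K + 1) - 1) := (p.1, ⟨2*m - 1, by omega⟩) with hq1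
  set q2 : Bool × Fin (2 ^ (K + 1) - 1) := (p.1, ⟨2*m, by omega⟩) with hq2
  have hcq1 : Child K p q1 := by
    refine ⟨rfl, Or.inl ?_⟩; simp [hq1]; omega
  have hcq2 : Child K p q2 := by
    refine ⟨rfl, Or.inr ?_⟩; simp [hq2]; omega
  have haq1 : (TK K).Adj p q1 := (adj_iff K p q1).mpr (Or.inl hcq1)
  have haq2 : (TK K).Adj p q2 := (adj_iff K p q2).mpr (Or.inl hcq2)
  -- the third neighbor
  obtain ⟨q3, haq3, hd3⟩ : ∃ q3, (TK K).Adj p q3 ∧ (q3 ≠ q1 ∧ q3 ≠ q2) := by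
    by_cases h1 : m = 1
    · refine ⟨(!p.1, p.2), (adj_iff K _ _).mpr (Or.inr (Or.inr
        ⟨by omega, by show ((p.2 : ℕ)) = 0; omega, ?_⟩)), ?_, ?_⟩
      · simp
      · intro h; rw [hq1] at h
        have := congrArg Prod.fst h; simp at this
      · intro h; rw [hq2] at h
        have := congrArg Prod.fst h; simp at this
    · -- parent
      have hm2 : 2 ≤ m := by omega
      refine ⟨(p.1, ⟨m/2 - 1, by omega⟩), (adj_iff K _ _).mpr (Or.inr (Or.inl ⟨rfl, ?_⟩)), ?_, ?_⟩
      · simp only []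
        omega
      · intro h; rw [hq1] at h
        have := congrArg (fun z => ((z.2 : ℕ))) h; simp at this; omega
      · intro h; rw [hq2] at h
        have := congrArg (fun z => ((z.2 : ℕ))) h; simp at this; omega
  -- the three images fill up the neighborhood
  have hne12 : q1 ≠ q2 := by
    intro h; rw [hq1, hq2] at h
    have := congrArg (fun z => ((z.2 : ℕ))) h; simp at this; omega
  have hmem : ∀ q, (TK K).Adj p q → f q ∈ G.neighborFinset (f p) := fun q hq =>
    (SimpleGraph.mem_neighborFinset _ _ _).mpr (hhom _ _ hq)
  set s : Finset (Fin n) := {f q3, f q1, f q2} with hs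
  have hsub : s ⊆ G.neighborFinset (f p) := by
    intro v hv
    simp only [hs, Finset.mem_insert, Finset.mem_singleton] at hv
    rcases hv with rfl | rfl | rfl
    · exact hmem _ haq3
    · exact hmem _ haq1
    · exact hmem _ haq2
  have hcard : 3 ≤ s.card := by
    have : s.card = 3 := by
      rw [hs, Finset.card_eq_three]
      exact ⟨f q3, f q1, f q2, hinj.ne hd3.1, hinj.ne hd3.2, hinj.ne hne12, rfl⟩
    omega
  have heq : s = G.neighborFinset (f p) := by
    apply Finset.eq_of_subset_of_card_le hsub
    rw [SimpleGraph.card_neighborFinset_eq_degree, hcubic]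
    exact hcard
  have : j ∈ s := by
    rw [heq]; exact (SimpleGraph.mem_neighborFinset _ _ _).mpr hj
  simp only [hs, Finset.mem_insert, Finset.mem_singleton] at this
  rcases this with h | h | h
  · exact ⟨q3, haq3, h.symm⟩
  · exact ⟨q1, haq1, h.symm⟩
  · exact ⟨q2, haq2, h.symm⟩

end Deg

lemma trig_key (K : ℕ) (hK : 2 ≤ K) :
    2 * ∑ d ∈ Finset.range K,
        (2:ℝ)^d * (Real.sin (d * (Real.pi / K)) / (Real.sqrt 2)^d
          - Real.sin (((d+1:ℕ)) * (Real.pi / K)) / (Real.sqrt 2)^(d+1))^2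
      + 2 * (Real.sin (((0:ℕ)) * (Real.pi / K)) / (Real.sqrt 2)^(0:ℕ))^2
    ≤ (3 - 2 * Real.sqrt 2 * Real.cos (Real.pi / K)) *
        ∑ d ∈ Finset.range (K+1), (2:ℝ)^d * (Real.sin (d * (Real.pi / K)) / (Real.sqrt 2)^d)^2 := by
  obtain ⟨M, rfl⟩ : ∃ M, K = M + 2 := ⟨K - 2, by omega⟩
  push_cast
  set θ := Real.pi / ((M:ℝ)+2) with hθ
  set w : ℕ → ℝ := fun d => Real.sin (d * θ) with hw
  have hs2 : (Real.sqrt 2)^2 = 2 := Real.sq_sqrt (by norm_num)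
  have hsp : ∀ d : ℕ, ((Real.sqrt 2)^d)^2 = 2^d := by
    intro d; rw [← pow_mul, mul_comm d 2, pow_mul, hs2]
  have hspos : ∀ d : ℕ, (0:ℝ) < (Real.sqrt 2)^d := fun d =>
    pow_pos (Real.sqrt_pos.mpr (by norm_num)) d
  have hw0 : w 0 = 0 := by simp [hw]
  have hwK : w (M+2) = 0 := by
    have h : ((M:ℝ)+2) * θ = Real.pi := by
      rw [hθ]
      field_simp
    show Real.sin (((M+2:ℕ):ℝ) * θ) = 0
    push_cast
    rw [h, Real.sin_pi]
  have hrec : ∀ e : ℕ, w e + w (e+2) = 2 * Real.cos θ * w (e+1) := by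
    intro e
    have h1 : ((e:ℕ):ℝ) * θ = ((e:ℕ)+1) * θ - θ := by ring
    have h2 : (((e+2:ℕ)):ℝ) * θ = ((e:ℕ)+1) * θ + θ := by push_cast; ring
    have h3 : (((e+1:ℕ)):ℝ) * θ = ((e:ℕ)+1) * θ := by push_cast; ring
    simp only [hw, h1, h2, h3, Real.sin_add, Real.sin_sub]
    ring
  -- rewrite terms
  have hterm : ∀ d : ℕ, (2:ℝ)^d * (Real.sin (d * θ) / (Real.sqrt 2)^d
      - Real.sin ((d+1) * θ) / (Real.sqrt 2)^(d+1))^2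
      = (w d - w (d+1) / Real.sqrt 2)^2 := by
    intro d
    have h3 : (((d+1:ℕ)):ℝ) * θ = ((d:ℕ):ℝ) * θ + θ := by push_cast; ring
    have : Real.sin (d * θ) / (Real.sqrt 2)^d - Real.sin ((d+1) * θ) / (Real.sqrt 2)^(d+1)
        = (w d - w (d+1) / Real.sqrt 2) / (Real.sqrt 2)^d := by
      rw [pow_succ]
      field_simp [hw]
      push_cast
      ring_nf
      simp only [hw, Nat.cast_add, Nat.cast_one]; ring_nf
    rw [this, div_pow, ← hsp d]
    field_simp
  have hden : ∀ d : ℕ, (2:ℝ)^d * (Real.sin (d * θ) / (Real.sqrt 2)^d)^2 = (w d)^2 := by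
    intro d
    rw [div_pow, ← hsp d, hw]
    field_simp
  rw [Finset.sum_congr rfl (fun d _ => hterm d), Finset.sum_congr rfl (fun d _ => hden d)]
  set A := ∑ d ∈ Finset.range (M+3), (w d)^2 with hA
  set B := ∑ d ∈ Finset.range (M+2), w d * w (d+1) with hB
  have hsq : ∀ d : ℕ, (w d - w (d+1) / Real.sqrt 2)^2
      = (w d)^2 + (w (d+1))^2 / 2 - Real.sqrt 2 * (w d * w (d+1)) := by
    intro d
    have h2 : Real.sqrt 2 ≠ 0 := by positivity
    field_simp
    linear_combination (2 * w d * w (d+1) * Real.sqrt 2 - w (d+1)^2) * hs2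
  rw [Finset.sum_congr rfl (fun d _ => hsq d)]
  have e1 : A = ∑ d ∈ Finset.range (M+2), (w d)^2 + (w (M+2))^2 := by
    rw [hA]; exact Finset.sum_range_succ _ _
  have e2 : A = ∑ d ∈ Finset.range (M+2), (w (d+1))^2 + (w 0)^2 := by
    rw [hA]; exact Finset.sum_range_succ' _ _
  have hLHS : ∑ d ∈ Finset.range (M+2),
      ((w d)^2 + (w (d+1))^2 / 2 - Real.sqrt 2 * (w d * w (d+1)))
      = (A - (w (M+2))^2) + (A - (w 0)^2) / 2 - Real.sqrt 2 * B := by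
    rw [Finset.sum_sub_distrib, Finset.sum_add_distrib, ← Finset.mul_sum,
      ← Finset.sum_div]
    linarith
  have hBA : B = Real.cos θ * A := by
    have hB1 : B = ∑ e ∈ Finset.range (M+1), w (e+1) * w (e+2) := by
      rw [hB, Finset.sum_range_succ']
      simp [hw0]
    have hB2 : B = ∑ e ∈ Finset.range (M+1), w e * w (e+1) := by
      rw [hB, Finset.sum_range_succ, hwK]; ring
    have hA1 : A = ∑ e ∈ Finset.range (M+1), (w (e+1))^2 := by
      rw [hA, Finset.sum_range_succ', hw0]
      rw [Finset.sum_range_succ, hwK]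
      ring
    have h2B : B + B = 2 * Real.cos θ * ∑ e ∈ Finset.range (M+1), (w (e+1))^2 := by
      nth_rewrite 1 [hB2]
      rw [hB1, ← Finset.sum_add_distrib, Finset.mul_sum]
      refine Finset.sum_congr rfl (fun e _ => ?_)
      linear_combination w (e+1) * hrec e
    rw [hA1]; linarith
  have h0 : Real.sin ((0:ℝ) * θ) = 0 := by simp
  rw [hLHS, hw0, hwK, hBA, h0]
  ring_nf
  linarith
section MasterLemma

lemma ico_log_sum (F : ℕ → ℝ) (t : ℕ) :
    ∑ m ∈ Finset.Ico 1 (2^(t+1)), F (Nat.log 2 m)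
      = ∑ d ∈ Finset.range (t+1), (2:ℝ)^d * F d := by
  induction t with
  | zero => simp
  | succ t ih =>
      have h1 : (2:ℕ)^(t+1) ≤ 2^(t+2) := Nat.pow_le_pow_right (by norm_num) (by omega)
      rw [← Finset.sum_Ico_consecutive _ (Nat.one_le_two_pow) h1, ih]
      have h2 : ∑ m ∈ Finset.Ico (2^(t+1)) (2^(t+2)), F (Nat.log 2 m)
          = (2:ℝ)^(t+1) * F (t+1) := by
        rw [Finset.sum_congr rfl (fun m hm => ?_), Finset.sum_const, Nat.card_Ico]
        · have h3 : (2:ℕ)^(t+2) - 2^(t+1) = 2^(t+1) := by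
            have : (2:ℕ)^(t+2) = 2 * 2^(t+1) := by ring
            omega
          rw [h3]; push_cast [h3]; ring
        · simp only [Finset.mem_Ico] at hm
          rw [Nat.log_eq_of_pow_le_of_lt_pow hm.1 hm.2]
      rw [h2]
      conv_rhs => rw [Finset.sum_range_succ]

lemma fin_log_sum (t : ℕ) (F : ℕ → ℝ) :
    ∑ i : Fin (2^(t+1)-1), F (Nat.log 2 ((i:ℕ)+1))
      = ∑ d ∈ Finset.range (t+1), (2:ℝ)^d * F d := by
  rw [← ico_log_sum F t, Finset.sum_Ico_eq_sum_range]
  rw [Fin.sum_univ_eq_sum_range (fun k => F (Nat.log 2 (k+1))) (2^(t+1) - 1)]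
  apply Finset.sum_congr rfl
  intro k _
  rw [Nat.add_comm 1 k]

lemma master (K n : ℕ) (hK : 1 ≤ K) (G : SimpleGraph (Fin n)) (hcubic : ∀ v, G.degree v = 3)
    (f : Bool × Fin (2 ^ (K + 1) - 1) → Fin n) (hinj : Function.Injective f)
    (hhom : ∀ a b, (TK K).Adj a b → G.Adj (f a) (f b))
    (lam : ℝ) (c : ℕ → ℝ) (hcK : c K = 0)
    (hne : ∃ d, d ≤ K ∧ c d ≠ 0)
    (hineq : 2 * ∑ d ∈ Finset.range K, (2:ℝ)^d * (c d - c (d+1))^2 + 2 * (c 0)^2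
        ≤ lam * ∑ d ∈ Finset.range (K+1), (2:ℝ)^d * (c d)^2) :
    algConn (Fin n) G ≤ lam := by
  obtain ⟨hpow, h2K⟩ := pow_help K hK
  set Fc : ℕ → ℝ := fun d => if d < K then 2*(c d - c (d+1))^2 else 0 with hFc
  set Fq : ℕ → ℝ := fun d => (c d)^2 with hFq
  set val : Bool × Fin (2 ^ (K + 1) - 1) → ℝ :=
    fun p => (if p.1 then (1:ℝ) else -1) * c (Nat.log 2 ((p.2 : ℕ) + 1)) with hval
  set x : Fin n → ℝ := Function.extend f val 0 with hx
  have hxf : ∀ p, x (f p) = val p := fun p => hinj.extend_apply val 0 p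
  have hx0 : ∀ v, (¬ ∃ p, f p = v) → x v = 0 := fun v hv => by
    rw [hx, Function.extend_apply' _ _ _ hv]; rfl
  have himg : ∀ F : ℝ → ℝ, F 0 = 0 → ∑ v, F (x v) = ∑ p, F (val p) := by
    intro F hF
    have h1 : ∑ v ∈ Finset.univ.image f, F (x v) = ∑ p, F (val p) := by
      rw [Finset.sum_image (fun a _ b _ h => hinj h)]
      simp only [hxf]
    rw [← h1]
    apply (Finset.sum_subset (Finset.subset_univ _) _).symm
    intro v _ hv
    have hnr : ¬ ∃ p, f p = v := fun ⟨p, hp⟩ => hv (Finset.mem_image.mpr ⟨p, Finset.mem_univ _, hp⟩)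
    rw [hx0 v hnr, hF]
  have hsum0 : ∑ v, x v = 0 := by
    have h := himg _root_.id rfl
    simp only [_root_.id] at h
    rw [h, Fintype.sum_prod_type, Fintype.sum_bool, ← Finset.sum_add_distrib]
    apply Finset.sum_eq_zero
    intro i _
    simp [hval]
  -- nonvanishing
  obtain ⟨d0, hd0K, hcd0⟩ := hne
  have hd0lt : 2 ^ d0 - 1 < 2 ^ (K + 1) - 1 := by
    have h1 : (2:ℕ)^d0 ≤ 2^K := Nat.pow_le_pow_right (by norm_num) hd0K
    have h2 : (1:ℕ) ≤ 2^d0 := Nat.one_le_two_pow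
    omega
  set i0 : Fin (2 ^ (K + 1) - 1) := ⟨2^d0 - 1, hd0lt⟩ with hi0
  have hvali0 : val (true, i0) = c d0 := by
    have h1 : (1:ℕ) ≤ 2^d0 := Nat.one_le_two_pow
    simp only [hval]
    rw [show (2:ℕ)^d0 - 1 + 1 = 2^d0 from by omega, Nat.log_pow (by norm_num)]
    simp
  have hxne : x ≠ 0 := by
    intro h
    apply hcd0
    have h3 := congrFun h (f (true, i0))
    simp only [Pi.zero_apply] at h3
    rwa [hxf, hvali0] at h3
  -- leaves vanish
  have hval_leaf : ∀ p : Bool × Fin (2 ^ (K + 1) - 1),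
      ¬ ((p.2 : ℕ) + 1 < 2 ^ K) → val p = 0 := by
    intro p hp
    have hdep : Nat.log 2 ((p.2 : ℕ) + 1) = K := by
      apply Nat.log_eq_of_pow_le_of_lt_pow (by omega)
      have h5 := p.2.isLt
      omega
    simp [hval, hdep, hcK]
  -- support claim
  have hC3 : ∀ u v : Fin n, G.Adj u v → x u ≠ x v →
      ∃ p q, f p = u ∧ f q = v ∧ (TK K).Adj p q := by
    intro u v huv hxy
    by_cases hxu : x u = 0
    · have hxv : x v ≠ 0 := fun h => hxy (by rw [hxu, h])
      obtain ⟨q, rfl⟩ : ∃ q, f q = v := by by_contra h; exact hxv (hx0 v h)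
      have hint : (q.2 : ℕ) + 1 < 2 ^ K := by
        by_contra h
        rw [hxf] at hxv
        exact hxv (hval_leaf q h)
      obtain ⟨p, hadj, hfp⟩ := neighbors_of_internal hK hcubic hinj hhom q hint u huv.symm
      exact ⟨p, q, hfp, rfl, hadj.symm⟩
    · obtain ⟨p, rfl⟩ : ∃ p, f p = u := by by_contra h; exact hxu (hx0 u h)
      have hint : (p.2 : ℕ) + 1 < 2 ^ K := by
        by_contra h
        rw [hxf] at hxu
        exact hxu (hval_leaf p h)
      obtain ⟨q, hadj, hfq⟩ := neighbors_of_internal hK hcubic hinj hhom p hint v huv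
      exact ⟨p, q, rfl, hfq, hadj⟩
  set T : Fin n × Fin n → ℝ :=
    fun z => if G.Adj z.1 z.2 then (x z.1 - x z.2)^2 else 0 with hT
  set S : (Bool × Fin (2^(K+1)-1)) × (Bool × Fin (2^(K+1)-1)) → ℝ :=
    fun w => if (TK K).Adj w.1 w.2 then (val w.1 - val w.2)^2 else 0 with hS
  have hTzero : ∀ z : Fin n × Fin n,
      (¬ ∃ w : (Bool × Fin (2^(K+1)-1)) × (Bool × Fin (2^(K+1)-1)),
        (f w.1, f w.2) = z ∧ (TK K).Adj w.1 w.2) → T z = 0 := by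
    intro z hz
    by_contra hTz
    have hadj : G.Adj z.1 z.2 := by
      by_contra h; exact hTz (by simp [hT, h])
    have hxy : x z.1 ≠ x z.2 := by
      intro h; exact hTz (by simp [hT, hadj, h])
    obtain ⟨p, q, hp, hq, hpq⟩ := hC3 z.1 z.2 hadj hxy
    exact hz ⟨(p, q), by rw [hp, hq], hpq⟩
  have hNUM : ∑ z : Fin n × Fin n, T z ≤ ∑ w, S w := by
    set e : (Bool × Fin (2^(K+1)-1)) × (Bool × Fin (2^(K+1)-1)) → Fin n × Fin n :=
      fun w => (f w.1, f w.2) with he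
    have heinj : Function.Injective e := by
      intro a b hab
      rw [he] at hab
      have h1 := congrArg Prod.fst hab
      have h2 := congrArg Prod.snd hab
      simp only at h1 h2
      exact Prod.ext (hinj h1) (hinj h2)
    have h1 : ∑ z : Fin n × Fin n, T z = ∑ z ∈ Finset.univ.image e, T z := by
      apply (Finset.sum_subset (Finset.subset_univ _) _).symm
      intro z _ hz
      apply hTzero
      rintro ⟨w, hw, -⟩
      exact hz (Finset.mem_image.mpr ⟨w, Finset.mem_univ _, hw⟩)
    rw [h1, Finset.sum_image (fun a _ b _ h => heinj h)]
    apply Finset.sum_le_sum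
    intro w _
    by_cases hadj : (TK K).Adj w.1 w.2
    · have h2 : T (e w) = (val w.1 - val w.2)^2 := by
        simp [hT, he, hhom _ _ hadj, hxf]
      rw [h2]
      simp [hS, hadj]
    · have h2 : T (e w) = 0 := by
        apply hTzero
        rintro ⟨w', hw', hadj'⟩
        have hww : w' = w := heinj hw'
        rw [hww] at hadj'
        exact hadj hadj'
      rw [h2]
      simp [hS, hadj]
  -- decomposition of S
  have hSdecomp : ∀ w : (Bool × Fin (2^(K+1)-1)) × (Bool × Fin (2^(K+1)-1)), S w =
      (if Child K w.1 w.2 then (val w.1 - val w.2)^2 else 0)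
      + (if Child K w.2 w.1 then (val w.1 - val w.2)^2 else 0)
      + (if Cross K w.1 w.2 then (val w.1 - val w.2)^2 else 0) := by
    intro w
    by_cases h1 : Child K w.1 w.2
    · have h2 := child_not_child K h1
      have h3 := child_not_cross K h1
      simp [hS, (adj_iff K w.1 w.2).mpr (Or.inl h1), h1, h2, h3]
    · by_cases h2 : Child K w.2 w.1
      · have h3 := child_rev_not_cross K h2
        simp [hS, (adj_iff K w.1 w.2).mpr (Or.inr (Or.inl h2)), h1, h2, h3]
      · by_cases h3 : Cross K w.1 w.2
        · simp [hS, (adj_iff K w.1 w.2).mpr (Or.inr (Or.inr h3)), h1, h2, h3]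
        · have h4 : ¬ (TK K).Adj w.1 w.2 := by
            rw [adj_iff]; tauto
          simp [hS, h4, h1, h2, h3]
  have hSsum : ∑ w, S w
      = 2 * (∑ p, ∑ q, if Child K p q then (val p - val q)^2 else 0)
      + ∑ p, ∑ q, (if Cross K p q then (val p - val q)^2 else 0) := by
    have c1 : (∑ w : (Bool × Fin (2^(K+1)-1)) × (Bool × Fin (2^(K+1)-1)),
        (if Child K w.1 w.2 then (val w.1 - val w.2)^2 else 0))
        = ∑ p, ∑ q, (if Child K p q then (val p - val q)^2 else 0) :=
      Fintype.sum_prod_type _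
    have c2 : (∑ w : (Bool × Fin (2^(K+1)-1)) × (Bool × Fin (2^(K+1)-1)),
        (if Child K w.2 w.1 then (val w.1 - val w.2)^2 else 0))
        = ∑ p, ∑ q, (if Child K q p then (val p - val q)^2 else 0) :=
      Fintype.sum_prod_type _
    have c3 : (∑ w : (Bool × Fin (2^(K+1)-1)) × (Bool × Fin (2^(K+1)-1)),
        (if Cross K w.1 w.2 then (val w.1 - val w.2)^2 else 0))
        = ∑ p, ∑ q, (if Cross K p q then (val p - val q)^2 else 0) :=
      Fintype.sum_prod_type _
    rw [Finset.sum_congr rfl (fun w _ => hSdecomp w)]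
    rw [Finset.sum_add_distrib, Finset.sum_add_distrib]
    rw [c1, c2, c3]
    have hsw : (∑ p, ∑ q, (if Child K q p then ((val p - val q)^2) else 0))
        = ∑ p, ∑ q, (if Child K p q then (val p - val q)^2 else 0) := by
      rw [Finset.sum_comm]
      refine Finset.sum_congr rfl fun p _ => Finset.sum_congr rfl fun q _ => ?_
      rw [show (val q - val p)^2 = (val p - val q)^2 by ring]
    rw [hsw]
    ring
  -- inner child sums
  have hchild_inner : ∀ p : Bool × Fin (2^(K+1)-1),
      (∑ q, if Child K p q then (val p - val q)^2 else 0)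
      = Fc (Nat.log 2 ((p.2:ℕ)+1)) := by
    intro p
    set m := (p.2 : ℕ) + 1 with hm
    have hm1 : 1 ≤ m := by omega
    by_cases hp : m < 2 ^ K
    · have hNN : 2 * m + 1 ≤ 2^(K+1) - 1 := by omega
      set A : Bool × Fin (2^(K+1)-1) := (p.1, ⟨2*m - 1, by omega⟩) with hA
      set B : Bool × Fin (2^(K+1)-1) := (p.1, ⟨2*m, by omega⟩) with hB
      have hAB : A ≠ B := by
        intro h
        have h2 := congrArg (fun z => ((z.2 : ℕ))) h
        simp [hA, hB] at h2
        omega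
      set t : ℝ := (c (Nat.log 2 m) - c (Nat.log 2 m + 1))^2 with ht
      have hvq : ∀ q, Child K p q → (val p - val q)^2 = t := by
        rintro q ⟨hq1, hq2⟩
        have hdep : Nat.log 2 ((q.2:ℕ)+1) = Nat.log 2 m + 1 :=
          dep_child m (by omega) _ (by omega)
        simp only [hval, hdep, ← hq1, ht]
        cases hb : p.1 <;> simp <;> ring
      have hiff : ∀ q, Child K p q ↔ (q = A ∨ q = B) := by
        intro q
        constructor
        · rintro ⟨hq1, hq2⟩
          rcases hq2 with h | h
          · left
            refine Prod.ext hq1.symm (Fin.val_inj.mp ?_)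
            show ((q.2 : ℕ)) = 2*m - 1
            omega
          · right
            refine Prod.ext hq1.symm (Fin.val_inj.mp ?_)
            show ((q.2 : ℕ)) = 2*m
            omega
        · rintro (rfl | rfl)
          · refine ⟨rfl, Or.inl ?_⟩
            show (2*m - 1) + 1 = 2*m
            omega
          · refine ⟨rfl, Or.inr ?_⟩
            show (2*m) + 1 = 2*m + 1
            rfl
      have hpt : ∀ q, (if Child K p q then (val p - val q)^2 else 0)
          = (if q = A then t else 0) + (if q = B then t else 0) := by
        intro q
        by_cases hc : Child K p q
        · rw [if_pos hc, hvq q hc]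
          rcases (hiff q).mp hc with rfl | rfl
          · simp [hAB]
          · simp [Ne.symm hAB]
        · rw [if_neg hc]
          have h1 : q ≠ A := fun h => hc ((hiff q).mpr (Or.inl h))
          have h2 : q ≠ B := fun h => hc ((hiff q).mpr (Or.inr h))
          simp [h1, h2]
      rw [Finset.sum_congr rfl (fun q _ => hpt q), Finset.sum_add_distrib]
      simp only [Finset.sum_ite_eq', Finset.mem_univ, if_pos]
      simp only [hFc]
      rw [if_pos ((dep_lt_iff K p.2).mpr hp), ht]
      ring
    · have h0 : ∀ q, ¬ Child K p q := by
        rintro q ⟨h1, h2⟩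
        have := q.2.isLt
        omega
      rw [Finset.sum_eq_zero (fun q _ => by simp [h0 q])]
      simp only [hFc]
      rw [if_neg (fun h => hp ((dep_lt_iff K p.2).mp h))]
  have hsplit : ∀ gg : Fin (2^(K+1)-1) → ℝ,
      (∑ p : Bool × Fin (2^(K+1)-1), gg p.2) = 2 * ∑ i, gg i := by
    intro gg
    rw [Fintype.sum_prod_type, Fintype.sum_bool, two_mul]
  have hFcsum : (∑ d ∈ Finset.range (K+1), (2:ℝ)^d * Fc d)
      = ∑ d ∈ Finset.range K, (2:ℝ)^d * (2 * (c d - c (d+1))^2) := by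
    rw [Finset.sum_range_succ]
    simp only [hFc]
    rw [if_neg (lt_irrefl K), mul_zero, add_zero]
    apply Finset.sum_congr rfl
    intro d hd
    rw [Finset.mem_range] at hd
    rw [if_pos hd]
  have hchild_total : (∑ p, ∑ q, if Child K p q then (val p - val q)^2 else 0)
      = 2 * ∑ d ∈ Finset.range K, (2:ℝ)^d * (2 * (c d - c (d+1))^2) := by
    rw [Finset.sum_congr rfl (fun p _ => hchild_inner p)]
    rw [hsplit (fun i => Fc (Nat.log 2 ((i:ℕ)+1))), fin_log_sum K Fc, hFcsum]
  -- cross sum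
  have hzlt : (0:ℕ) < 2^(K+1) - 1 := by omega
  set z : Fin (2^(K+1)-1) := ⟨0, hzlt⟩ with hzdef
  have hval0 : ∀ b : Bool, val (b, z) = (if b then (1:ℝ) else -1) * c 0 := by
    intro b
    simp only [hval]
    rw [show Nat.log 2 ((((b, z) : Bool × Fin (2^(K+1)-1)).2 : ℕ) + 1) = 0 from by
      rw [show (((b, z) : Bool × Fin (2^(K+1)-1)).2 : ℕ) + 1 = 1 from rfl, Nat.log_one_right]]
  have hcrossiff : ∀ p q : Bool × Fin (2^(K+1)-1), Cross K p q ↔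
      ((p = (true, z) ∧ q = (false, z)) ∨ (p = (false, z) ∧ q = (true, z))) := by
    intro p q
    constructor
    · rintro ⟨h1, h2, h3⟩
      rcases p with ⟨pb, pi⟩
      rcases q with ⟨qb, qi⟩
      simp only at h1 h2 h3
      have hpi : pi = z := Fin.val_inj.mp (by simpa [hzdef] using h1)
      have hqi : qi = z := Fin.val_inj.mp (by simpa [hzdef] using h2)
      subst hpi; subst hqi
      cases pb <;> cases qb
      · exact absurd rfl h3
      · exact Or.inr ⟨rfl, rfl⟩
      · exact Or.inl ⟨rfl, rfl⟩
      · exact absurd rfl h3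
    · rintro (⟨rfl, rfl⟩ | ⟨rfl, rfl⟩) <;> exact ⟨rfl, rfl, by simp⟩
  have hsingle : ∀ (P Q : Bool × Fin (2^(K+1)-1)) (v : ℝ),
      (∑ p, ∑ q, (if p = P then (if q = Q then v else 0) else 0)) = v := by
    intro P Q v
    rw [Finset.sum_eq_single P (fun b _ hb => by simp [hb])
      (fun h => absurd (Finset.mem_univ P) h)]
    rw [Finset.sum_eq_single Q (fun b _ hb => by simp [hb])
      (fun h => absurd (Finset.mem_univ Q) h)]
    simp
  have hcross_sum : (∑ p, ∑ q, (if Cross K p q then (val p - val q)^2 else 0))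
      = 8 * (c 0)^2 := by
    have hv1 : (val ((true:Bool), z) - val ((false:Bool), z))^2 = 4*(c 0)^2 := by
      rw [hval0, hval0]; norm_num; ring
    have hv2 : (val ((false:Bool), z) - val ((true:Bool), z))^2 = 4*(c 0)^2 := by
      rw [hval0, hval0]; norm_num; ring
    have hPQ : ((true:Bool), z) ≠ ((false:Bool), z) := by simp
    have hpt : ∀ p q : Bool × Fin (2^(K+1)-1),
        (if Cross K p q then (val p - val q)^2 else 0)
        = (if p = ((true:Bool), z) then (if q = ((false:Bool), z) then 4*(c 0)^2 else 0) else 0)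
          + (if p = ((false:Bool), z) then (if q = ((true:Bool), z) then 4*(c 0)^2 else 0) else 0) := by
      intro p q
      have hQP : ((false:Bool), z) ≠ ((true:Bool), z) := fun h => hPQ h.symm
      by_cases hc : Cross K p q
      · rw [if_pos hc]
        rcases (hcrossiff p q).mp hc with ⟨rfl, rfl⟩ | ⟨rfl, rfl⟩
        · rw [if_pos rfl, if_pos rfl, if_neg hPQ, hv1]
          ring
        · rw [if_pos rfl, if_pos rfl, if_neg hQP, hv2]
          ring
      · rw [if_neg hc]
        have e1 : ¬(p = ((true:Bool), z) ∧ q = ((false:Bool), z)) :=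
          fun ⟨a, b⟩ => hc ((hcrossiff p q).mpr (Or.inl ⟨a, b⟩))
        have e2 : ¬(p = ((false:Bool), z) ∧ q = ((true:Bool), z)) :=
          fun ⟨a, b⟩ => hc ((hcrossiff p q).mpr (Or.inr ⟨a, b⟩))
        by_cases h1 : p = ((true:Bool), z)
        · have h2 : q ≠ ((false:Bool), z) := fun h => e1 ⟨h1, h⟩
          have h3 : p ≠ ((false:Bool), z) := fun h => hPQ (h1 ▸ h)
          rw [if_pos h1, if_neg h2, if_neg h3]
          ring
        · by_cases h3 : p = ((false:Bool), z)
          · have h4 : q ≠ ((true:Bool), z) := fun h => e2 ⟨h3, h⟩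
            rw [if_neg h1, if_pos h3, if_neg h4]
            ring
          · rw [if_neg h1, if_neg h3]
            ring
    rw [Finset.sum_congr rfl (fun p _ => Finset.sum_congr rfl (fun q _ => hpt p q))]
    rw [Finset.sum_congr rfl (fun p _ => Finset.sum_add_distrib), Finset.sum_add_distrib]
    rw [hsingle, hsingle]
    ring
  -- denominator
  have hden : ∑ v, (x v)^2 = 2 * ∑ d ∈ Finset.range (K+1), (2:ℝ)^d * (c d)^2 := by
    rw [show (∑ v, (x v)^2) = ∑ v, (fun t:ℝ => t^2) (x v) from rfl,
      himg (fun t => t^2) (by norm_num)]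
    rw [Finset.sum_congr rfl (fun p _ => show (fun t:ℝ => t^2) (val p)
        = Fq (Nat.log 2 ((p.2:ℕ)+1)) from by
      simp only [hval, hFq]
      rcases p with ⟨pb, pi⟩
      cases pb <;> simp <;> ring)]
    rw [hsplit (fun i => Fq (Nat.log 2 ((i:ℕ)+1))), fin_log_sum K Fq]
  have hdenpos : 0 < ∑ v, (x v)^2 := by
    obtain ⟨v, hv⟩ : ∃ v, x v ≠ 0 := by
      by_contra h; push_neg at h; exact hxne (funext h)
    exact Finset.sum_pos' (fun i _ => sq_nonneg _) ⟨v, Finset.mem_univ _, by positivity⟩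
  -- assembly
  have hbdd : BddBelow {r : ℝ | ∃ y : Fin n → ℝ, y ≠ 0 ∧ (∑ i, y i) = 0 ∧
      r = (∑ i, ∑ j, if G.Adj i j then (y i - y j) ^ 2 else 0) /
        (2 * ∑ i, (y i) ^ 2)} := by
    refine ⟨0, ?_⟩
    rintro r ⟨y, -, -, rfl⟩
    apply div_nonneg
    · apply Finset.sum_nonneg
      intro i _
      apply Finset.sum_nonneg
      intro j _
      split_ifs
      exacts [sq_nonneg _, le_rfl]
    · positivity
  have hmem : (∑ i, ∑ j, if G.Adj i j then (x i - x j) ^ 2 else 0) /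
        (2 * ∑ i, (x i) ^ 2) ∈ {r : ℝ | ∃ y : Fin n → ℝ, y ≠ 0 ∧ (∑ i, y i) = 0 ∧
      r = (∑ i, ∑ j, if G.Adj i j then (y i - y j) ^ 2 else 0) /
        (2 * ∑ i, (y i) ^ 2)} := ⟨x, hxne, hsum0, rfl⟩
  have hnum_le : (∑ i, ∑ j, if G.Adj i j then (x i - x j) ^ 2 else 0)
      ≤ lam * (2 * ∑ i, (x i)^2) := by
    have e1 : (∑ i, ∑ j, if G.Adj i j then (x i - x j) ^ 2 else 0)
        = ∑ z : Fin n × Fin n, T z := by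
      rw [Fintype.sum_prod_type]
    have e2 : ∑ w, S w ≤ lam * (2 * ∑ i, (x i)^2) := by
      rw [hSsum, hchild_total, hcross_sum, hden]
      have e3 : (∑ d ∈ Finset.range K, (2:ℝ)^d * (2 * (c d - c (d+1))^2))
          = 2 * ∑ d ∈ Finset.range K, (2:ℝ)^d * (c d - c (d+1))^2 := by
        rw [Finset.mul_sum]
        exact Finset.sum_congr rfl fun d _ => by ring
      rw [e3]
      nlinarith [hineq]
    calc (∑ i, ∑ j, if G.Adj i j then (x i - x j) ^ 2 else 0)
        = ∑ z : Fin n × Fin n, T z := e1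
      _ ≤ ∑ w, S w := hNUM
      _ ≤ lam * (2 * ∑ i, (x i)^2) := e2
  have hfinal : (∑ i, ∑ j, if G.Adj i j then (x i - x j) ^ 2 else 0) /
        (2 * ∑ i, (x i) ^ 2) ≤ lam := by
    rw [div_le_iff₀ (by linarith : (0:ℝ) < 2 * ∑ i, (x i)^2)]
    linarith [hnum_le]
  exact le_trans (csInf_le hbdd hmem) hfinal

end MasterLemma

/-- **Lemma (double binary tree bound).** If a cubic graph `G` contains `T_K` as a
subgraph (there is an injective map preserving adjacency), then
`λ₂(G) ≤ 3 - 2√2·cos(π/K)`. -/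
theorem cubic_with_TK_subgraph_algConn_le (K n : ℕ) (hK : 1 ≤ K)
    (G : SimpleGraph (Fin n)) (hcubic : ∀ v, G.degree v = 3)
    (f : Bool × Fin (2 ^ (K + 1) - 1) → Fin n) (hinj : Function.Injective f)
    (hhom : ∀ a b, (TK K).Adj a b → G.Adj (f a) (f b)) :
    algConn (Fin n) G ≤ 3 - 2 * Real.sqrt 2 * Real.cos (Real.pi / K) := by
  by_cases hK2 : 2 ≤ K
  · apply master K n hK G hcubic f hinj hhom _
      (fun d : ℕ => Real.sin (d * (Real.pi / K)) / (Real.sqrt 2)^d)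
    · have hKr : (K:ℝ) ≠ 0 := Nat.cast_ne_zero.mpr (by omega)
      show Real.sin ((K:ℝ) * (Real.pi / K)) / (Real.sqrt 2)^K = 0
      rw [show (K:ℝ) * (Real.pi / K) = Real.pi from by rw [mul_comm]; exact div_mul_cancel₀ _ hKr]
      rw [Real.sin_pi, zero_div]
    · refine ⟨1, by omega, ?_⟩
      have hKpos : (0:ℝ) < K := by exact_mod_cast (by omega : 0 < K)
      have hπ : 0 < Real.pi / K := div_pos Real.pi_pos hKpos
      have h2 : Real.pi / K < Real.pi :=
        div_lt_self Real.pi_pos (by exact_mod_cast (by omega : 1 < K))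
      have hs := Real.sin_pos_of_pos_of_lt_pi hπ h2
      show Real.sin (((1:ℕ):ℝ) * (Real.pi / K)) / (Real.sqrt 2)^1 ≠ 0
      rw [Nat.cast_one, one_mul]
      exact ne_of_gt (div_pos hs (by positivity))
    · exact trig_key K hK2
  · have hK1 : K = 1 := by omega
    subst hK1
    apply master 1 n hK G hcubic f hinj hhom _
      (fun d : ℕ => if d = 0 then (1:ℝ) else 0)
    · simp
    · exact ⟨0, by omega, by simp⟩
    · have hs2 : Real.sqrt 2 ^ 2 = 2 := Real.sq_sqrt (by norm_num)
      have hs0 : (0:ℝ) ≤ Real.sqrt 2 := Real.sqrt_nonneg 2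
      norm_num [Finset.sum_range_succ, Real.cos_pi]
      nlinarith [hs2, hs0]
end

section
/- Any tree T on n ≥ 3 vertices has algebraic connectivity λ₂(T) ≤ 1, with equality if and only if T is the star K_{1,n−1}. -/
open scoped Classical

/-- The star `K_{1,n-1}` on `Fin n`: the vertex `0` is adjacent to all other vertices. -/
def starGraph (n : ℕ) : SimpleGraph (Fin n) :=
  SimpleGraph.fromRel (fun a _ => (a : ℕ) = 0)

def rset (V : Type*) [Fintype V] (G : SimpleGraph V) : Set ℝ :=
  {r : ℝ | ∃ x : V → ℝ, x ≠ 0 ∧ (∑ i, x i) = 0 ∧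
    r = (∑ i, ∑ j, if G.Adj i j then (x i - x j) ^ 2 else 0) /
        (2 * ∑ i, (x i) ^ 2)}

lemma algConn_eq (V : Type*) [Fintype V] (G : SimpleGraph V) :
    algConn V G = sInf (rset V G) := rfl

lemma rset_nonneg {V : Type*} [Fintype V] (G : SimpleGraph V) {r : ℝ}
    (hr : r ∈ rset V G) : 0 ≤ r := by
  obtain ⟨x, -, -, rfl⟩ := hr
  apply div_nonneg
  · refine Finset.sum_nonneg fun i _ => Finset.sum_nonneg fun j _ => ?_
    split_ifs
    · exact sq_nonneg _
    · exact le_refl 0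
  · positivity

lemma rset_bddBelow {V : Type*} [Fintype V] (G : SimpleGraph V) :
    BddBelow (rset V G) := ⟨0, fun _ hr => rset_nonneg G hr⟩

lemma rset_iso {V : Type*} [Fintype V] {G H : SimpleGraph V} (e : G ≃g H) :
    rset V G = rset V H := by
  have key : ∀ (G H : SimpleGraph V) (e : G ≃g H), rset V G ⊆ rset V H := by
    intro G H e r hr
    obtain ⟨x, hx0, hxs, rfl⟩ := hr
    refine ⟨x ∘ e.symm, ?_, ?_, ?_⟩
    · intro h
      apply hx0
      funext a
      have := congrFun h (e a)
      simpa using this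
    · rw [← Equiv.sum_comp e.toEquiv (fun i => (x ∘ e.symm) i)]
      simpa using hxs
    · congr 1
      · refine Fintype.sum_equiv e.toEquiv _ _ fun i => ?_
        refine Fintype.sum_equiv e.toEquiv _ _ fun j => ?_
        simp [e.map_adj_iff]
      · congr 1
        rw [← Equiv.sum_comp e.toEquiv (fun i => ((x ∘ e.symm) i)^2)]
        simp
  exact le_antisymm (key G H e) (key H G e.symm)

lemma algConn_iso {V : Type*} [Fintype V] {G H : SimpleGraph V} (e : G ≃g H) :
    algConn V G = algConn V H := by
  rw [algConn_eq, algConn_eq, rset_iso e]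

lemma starGraph_adj {n : ℕ} [NeZero n] (i j : Fin n) :
    (starGraph n).Adj i j ↔ i ≠ j ∧ (i = 0 ∨ j = 0) := by
  have h0 : ∀ k : Fin n, (k : ℕ) = 0 ↔ k = 0 := by
    intro k
    rw [Fin.ext_iff, Fin.val_zero]
  simp only [starGraph, SimpleGraph.fromRel_adj, h0, ne_eq]

lemma star_num {n : ℕ} [NeZero n] (x : Fin n → ℝ) :
    (∑ i, ∑ j, if (starGraph n).Adj i j then (x i - x j)^2 else 0)
      = 2 * ∑ j, (x 0 - x j)^2 := by
  have h : ∀ i : Fin n, (∑ j, if (starGraph n).Adj i j then (x i - x j)^2 else 0)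
      = (x i - x 0)^2 + (if i = 0 then ∑ j, (x 0 - x j)^2 else 0) := by
    intro i
    by_cases hi : i = 0
    · subst hi
      rw [if_pos rfl, show (x 0 - x 0)^2 = 0 by ring, zero_add]
      refine Finset.sum_congr rfl fun j _ => ?_
      by_cases hj : j = 0
      · subst hj; simp [starGraph_adj]
      · rw [if_pos ((starGraph_adj _ _).2 ⟨fun h => hj h.symm, Or.inl rfl⟩)]
    · rw [if_neg hi, add_zero]
      have hterm : ∀ j : Fin n, (if (starGraph n).Adj i j then (x i - x j)^2 else 0)
          = if j = 0 then (x i - x 0)^2 else 0 := by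
        intro j
        by_cases hj : j = 0
        · subst hj
          rw [if_pos ((starGraph_adj _ _).2 ⟨hi, Or.inr rfl⟩), if_pos rfl]
        · rw [if_neg, if_neg hj]
          rw [starGraph_adj]
          tauto
      rw [Finset.sum_congr rfl fun j _ => hterm j, Finset.sum_ite_eq' Finset.univ 0]
      simp
  rw [Finset.sum_congr rfl fun i _ => h i, Finset.sum_add_distrib]
  have h2 : ∑ i : Fin n, (if i = (0:Fin n) then ∑ j, (x 0 - x j)^2 else 0)
      = ∑ j, (x 0 - x j)^2 := by simp
  have h3 : ∑ i : Fin n, (x i - x 0)^2 = ∑ i : Fin n, (x 0 - x i)^2 :=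
    Finset.sum_congr rfl fun i _ => by ring
  rw [h2, h3]; ring

lemma one_le_of_mem_rset_star {n : ℕ} (hn : 3 ≤ n) {r : ℝ}
    (hr : r ∈ rset (Fin n) (starGraph n)) : 1 ≤ r := by
  haveI : NeZero n := ⟨by omega⟩
  obtain ⟨x, hx0, hxs, rfl⟩ := hr
  obtain ⟨i0, hi0⟩ := Function.ne_iff.mp hx0
  have hi0' : x i0 ≠ 0 := hi0
  have hD : 0 < ∑ i, x i ^ 2 := by
    have h1 : (0:ℝ) < x i0 ^ 2 := by positivity
    have h2 : x i0 ^ 2 ≤ ∑ i, x i ^ 2 :=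
      Finset.single_le_sum (fun i _ => sq_nonneg (x i)) (Finset.mem_univ i0)
    linarith
  rw [star_num, le_div_iff₀ (by positivity)]
  have expand : ∑ j, (x 0 - x j)^2
      = n * (x 0)^2 - 2 * x 0 * (∑ j, x j) + ∑ j, x j ^ 2 := by
    have h : ∀ j : Fin n, (x 0 - x j)^2 = x 0^2 - 2*x 0*x j + x j^2 := fun j => by ring
    rw [Finset.sum_congr rfl fun j _ => h j, Finset.sum_add_distrib, Finset.sum_sub_distrib,
      Finset.sum_const, ← Finset.mul_sum, Finset.card_univ, Fintype.card_fin, nsmul_eq_mul]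
  rw [expand, hxs]
  have hn' : (3:ℝ) ≤ (n:ℝ) := by exact_mod_cast hn
  nlinarith [sq_nonneg (x 0)]

lemma one_mem_rset_star {n : ℕ} (hn : 3 ≤ n) : (1:ℝ) ∈ rset (Fin n) (starGraph n) := by
  haveI : NeZero n := ⟨by omega⟩
  set a : Fin n := ⟨1, by omega⟩ with ha
  set b : Fin n := ⟨2, by omega⟩ with hb
  have hab : a ≠ b := by simp [ha, hb, Fin.ext_iff]
  have ha0 : (0 : Fin n) ≠ a := by simp [ha, Fin.ext_iff]
  have hb0 : (0 : Fin n) ≠ b := by simp [hb, Fin.ext_iff]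
  set x : Fin n → ℝ := fun i => if i = a then 1 else if i = b then -1 else 0 with hxdef
  have hxa : x a = 1 := by simp [hxdef]
  have hx0 : x 0 = 0 := by
    show (if (0:Fin n) = a then (1:ℝ) else if (0:Fin n) = b then -1 else 0) = 0
    rw [if_neg ha0, if_neg hb0]
  have hsq : ∀ i, x i ^ 2 = (if i = a then (1:ℝ) else 0) + (if i = b then (1:ℝ) else 0) := by
    intro i
    simp only [hxdef]
    split_ifs with h1 h2 <;> simp_all <;> norm_num
  have hD : ∑ i, x i ^ 2 = 2 := by
    rw [Finset.sum_congr rfl fun i _ => hsq i, Finset.sum_add_distrib]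
    simp
    try norm_num
  refine ⟨x, ?_, ?_, ?_⟩
  · intro h
    rw [funext_iff] at h
    have := h a
    rw [hxa] at this
    norm_num at this
  · have h : ∀ i, x i = (if i = a then (1:ℝ) else 0) + (if i = b then (-1:ℝ) else 0) := by
      intro i
      simp only [hxdef]
      split_ifs with h1 h2 <;> simp_all
    rw [Finset.sum_congr rfl fun i _ => h i, Finset.sum_add_distrib]
    simp
  · rw [star_num]
    have hnum : ∑ j, (x 0 - x j)^2 = 2 := by
      have : ∀ j, (x 0 - x j)^2 = x j ^ 2 := by
        intro j; rw [hx0]; ring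
      rw [Finset.sum_congr rfl fun j _ => this j, hD]
    rw [hnum, hD]
    norm_num

variable {n : ℕ} {G : SimpleGraph (Fin n)}

lemma exists_adj' (hG : G.Connected) (hn : 2 ≤ n) (v : Fin n) : ∃ w, G.Adj v w := by
  obtain ⟨w, hw⟩ : ∃ w : Fin n, w ≠ v :=
    Fintype.exists_ne_of_one_lt_card (by simp; omega) v
  obtain ⟨p⟩ := hG.preconnected v w
  cases p with
  | nil => exact absurd rfl hw
  | cons h _ => exact ⟨_, h⟩

lemma exists_leaf (hT : G.IsTree) (hn : 3 ≤ n) : ∃ v, G.degree v = 1 := by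
  by_contra hcon
  push_neg at hcon
  have h2 : ∀ v, 2 ≤ G.degree v := by
    intro v
    have h1 : 0 < G.degree v :=
      (G.degree_pos_iff_exists_adj v).2 (exists_adj' hT.isConnected (by omega) v)
    have := hcon v
    omega
  have hsum : (2*n : ℕ) ≤ ∑ v, G.degree v := by
    calc (2*n:ℕ) = ∑ _v : Fin n, 2 := by simp [Finset.sum_const, Finset.card_univ, mul_comm]
    _ ≤ _ := Finset.sum_le_sum fun v _ => h2 v
  rw [SimpleGraph.sum_degrees_eq_twice_card_edges] at hsum
  have hcard := hT.card_edgeFinset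
  rw [Fintype.card_fin] at hcard
  omega

lemma star_structure (hT : G.IsTree) (hn : 3 ≤ n) {c : Fin n}
    (hc : ∀ z, z ≠ c → G.Adj c z) :
    ∀ a b, G.Adj a b ↔ a ≠ b ∧ (a = c ∨ b = c) := by
  have hnbr : G.neighborFinset c = Finset.univ.erase c := by
    ext z
    simp only [SimpleGraph.mem_neighborFinset, Finset.mem_erase, Finset.mem_univ, and_true]
    exact ⟨fun h => (G.ne_of_adj h).symm, fun h => hc z h⟩
  have hdegc : G.degree c = n - 1 := by
    rw [SimpleGraph.degree, hnbr, Finset.card_erase_of_mem (Finset.mem_univ c),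
      Finset.card_univ, Fintype.card_fin]
  have hsum : ∑ v, G.degree v = 2*(n-1) := by
    rw [SimpleGraph.sum_degrees_eq_twice_card_edges]
    have hcard := hT.card_edgeFinset
    rw [Fintype.card_fin] at hcard
    omega
  have hrest : ∑ v ∈ Finset.univ.erase c, G.degree v = n - 1 := by
    have h := Finset.sum_erase_add Finset.univ (fun v => G.degree v) (Finset.mem_univ c)
    rw [hsum] at h
    omega
  have hone : ∀ v, v ≠ c → G.degree v = 1 := by
    intro v hv
    by_contra hne
    have hge : ∀ u ∈ Finset.univ.erase c, 1 ≤ G.degree u := by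
      intro u hu
      exact (G.degree_pos_iff_exists_adj u).2 (exists_adj' hT.isConnected (by omega) u)
    have hlt : ∑ u ∈ Finset.univ.erase c, (1:ℕ) < ∑ u ∈ Finset.univ.erase c, G.degree u := by
      refine Finset.sum_lt_sum hge ⟨v, Finset.mem_erase.2 ⟨hv, Finset.mem_univ v⟩, ?_⟩
      have : 0 < G.degree v :=
        (G.degree_pos_iff_exists_adj v).2 (exists_adj' hT.isConnected (by omega) v)
      omega
    rw [hrest, Finset.sum_const, Finset.card_erase_of_mem (Finset.mem_univ c),
      Finset.card_univ, Fintype.card_fin, smul_eq_mul, mul_one] at hlt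
    have hle : G.degree v ≤ ∑ u ∈ Finset.univ.erase c, G.degree u :=
      Finset.single_le_sum (f := fun u => G.degree u) (fun u _ => Nat.zero_le _)
        (Finset.mem_erase.2 ⟨hv, Finset.mem_univ v⟩)
    rw [hrest] at hle
    omega
  intro a b
  constructor
  · intro hab
    refine ⟨G.ne_of_adj hab, ?_⟩
    by_contra hcon
    push_neg at hcon
    obtain ⟨hac, hbc⟩ := hcon
    have hsub : {b, c} ⊆ G.neighborFinset a := by
      intro t ht
      simp only [Finset.mem_insert, Finset.mem_singleton] at ht
      rcases ht with rfl | rfl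
      · exact (SimpleGraph.mem_neighborFinset _ _ _).2 hab
      · exact (SimpleGraph.mem_neighborFinset _ _ _).2 (hc a hac).symm
    have hcard : ({b, c} : Finset (Fin n)).card = 2 := Finset.card_pair hbc
    have := Finset.card_le_card hsub
    rw [hcard] at this
    have := hone a hac
    rw [SimpleGraph.degree] at this
    omega
  · rintro ⟨hne, rfl | rfl⟩
    · exact hc b (Ne.symm hne)
    · exact (hc a hne).symm

lemma star_iso (hn : 3 ≤ n) {c : Fin n}
    (hadj : ∀ a b, G.Adj a b ↔ a ≠ b ∧ (a = c ∨ b = c)) :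
    Nonempty (G ≃g starGraph n) := by
  haveI : NeZero n := ⟨by omega⟩
  have hswap : ∀ z, Equiv.swap c 0 z = 0 ↔ z = c := by
    intro z
    constructor
    · intro h
      apply (Equiv.swap c 0).injective
      rw [h, Equiv.swap_apply_left]
    · rintro rfl
      exact Equiv.swap_apply_left _ _
  refine ⟨⟨Equiv.swap c 0, ?_⟩⟩
  intro a b
  rw [starGraph_adj, hadj]
  rw [hswap a, hswap b, ne_eq, (Equiv.swap c 0).injective.eq_iff]

lemma exists_far_leaf (hT : G.IsTree) (hn : 3 ≤ n) {c z : Fin n}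
    (hz : z ≠ c) (hznadj : ¬ G.Adj c z) :
    ∃ w u', G.neighborFinset w = {u'} ∧ 2 ≤ G.dist c w ∧ u' ≠ c := by
  obtain ⟨w, -, hw⟩ := Finset.exists_max_image Finset.univ (G.dist c) ⟨c, Finset.mem_univ c⟩
  have hreach : ∀ y t : Fin n, G.Reachable y t := fun y t => hT.isConnected.preconnected y t
  have hdz : 2 ≤ G.dist c z := by
    have h0 : G.dist c z ≠ 0 := by
      rw [SimpleGraph.dist_ne_zero_iff_ne_and_reachable]
      exact ⟨fun h => hz h.symm, hreach c z⟩
    have h1 : G.dist c z ≠ 1 := fun h => hznadj (SimpleGraph.dist_eq_one_iff_adj.mp h)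
    omega
  have hd : 2 ≤ G.dist c w := le_trans hdz (hw z (Finset.mem_univ z))
  have key : ∀ y, G.Adj w y → ∃ p : G.Walk w c, p.IsPath ∧ p.getVert 1 = y := by
    intro y hy
    obtain ⟨p, hp, hlen⟩ := (hreach y c).exists_path_of_dist
    have hws : w ∉ p.support := by
      intro hws
      have hspec := p.take_spec hws
      have hlen2 : (p.takeUntil w hws).length + (p.dropUntil w hws).length = p.length := by
        rw [← SimpleGraph.Walk.length_append, hspec]
      have hdrop : G.dist c w ≤ (p.dropUntil w hws).length := by
        rw [SimpleGraph.dist_comm]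
        exact SimpleGraph.dist_le _
      have hylen : p.length ≤ G.dist c w := by
        rw [hlen, SimpleGraph.dist_comm]
        exact hw y (Finset.mem_univ y)
      have htake0 : (p.takeUntil w hws).length = 0 := by omega
      have : y = w := SimpleGraph.Walk.eq_of_length_eq_zero htake0
      exact G.ne_of_adj hy this.symm
    exact ⟨SimpleGraph.Walk.cons hy p, hp.cons hws, by
      exact (SimpleGraph.Walk.getVert_cons_succ (n := 0) p hy).trans p.getVert_zero⟩
  obtain ⟨y0, hy0⟩ := exists_adj' hT.isConnected (by omega) w
  have huniq := hT.existsUnique_path w c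
  obtain ⟨q0, -, hq0u⟩ := huniq
  have hall : ∀ y, G.Adj w y → y = y0 := by
    intro y hy
    obtain ⟨p, hp, hv⟩ := key y hy
    obtain ⟨p0, hp0, hv0⟩ := key y0 hy0
    rw [← hv, ← hv0, hq0u p hp, hq0u p0 hp0]
  refine ⟨w, y0, ?_, hd, ?_⟩
  · ext t
    simp only [SimpleGraph.mem_neighborFinset, Finset.mem_singleton]
    exact ⟨fun h => hall t h, fun h => h ▸ hy0⟩
  · intro h
    rw [h] at hy0
    have h1 : G.dist c w = 1 := SimpleGraph.dist_eq_one_iff_adj.mpr hy0.symm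
    omega

lemma nonstar_element (hT : G.IsTree) (hn : 3 ≤ n) {v c w u' : Fin n}
    (hv : G.neighborFinset v = {c}) (hw : G.neighborFinset w = {u'})
    (hcu : c ≠ u') (hvw : v ≠ w) (hvu : v ≠ u') (hwc : w ≠ c) :
    ∃ r ∈ rset (Fin n) G, r < 1 := by
  have hnR : (3:ℝ) ≤ (n:ℝ) := by exact_mod_cast hn
  have hnpos : (0:ℝ) < (n:ℝ) := by linarith
  set ε : ℝ := 1/(n:ℝ) with hε
  have hεpos : 0 < ε := by positivity
  have hadjv : ∀ t, G.Adj v t ↔ t = c := by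
    intro t; rw [← SimpleGraph.mem_neighborFinset, hv, Finset.mem_singleton]
  have hadjw : ∀ t, G.Adj w t ↔ t = u' := by
    intro t; rw [← SimpleGraph.mem_neighborFinset, hw, Finset.mem_singleton]
  have hvc : v ≠ c := G.ne_of_adj ((hadjv c).2 rfl)
  have hwu : w ≠ u' := G.ne_of_adj ((hadjw u').2 rfl)
  set x : Fin n → ℝ := fun i =>
    if i = v then 1 else if i = w then -1 else if i = c then ε
      else if i = u' then -ε else 0 with hxdef
  have hxv : x v = 1 := by simp [hxdef]
  have hxw : x w = -1 := by simp [hxdef, Ne.symm hvw]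
  have hxc : x c = ε := by simp [hxdef, Ne.symm hvc, Ne.symm hwc]
  have hxu : x u' = -ε := by simp [hxdef, Ne.symm hvu, Ne.symm hwu, Ne.symm hcu]
  have hxo : ∀ i, i ≠ v → i ≠ w → i ≠ c → i ≠ u' → x i = 0 := by
    intro i h1 h2 h3 h4
    simp only [hxdef]; rw [if_neg h1, if_neg h2, if_neg h3, if_neg h4]
  -- sum zero
  have hsum0 : (∑ i, x i) = 0 := by
    have hdec : ∀ i, x i = (if i = v then (1:ℝ) else 0) + (if i = w then (-1:ℝ) else 0)
        + (if i = c then ε else 0) + (if i = u' then -ε else 0) := by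
      intro i
      by_cases h1 : i = v
      · rw [h1, hxv, if_pos rfl, if_neg hvw, if_neg hvc, if_neg hvu]; ring
      · by_cases h2 : i = w
        · rw [h2, hxw, if_neg (Ne.symm hvw), if_pos rfl, if_neg hwc, if_neg hwu]; ring
        · by_cases h3 : i = c
          · rw [h3, hxc, if_neg (Ne.symm hvc), if_neg (Ne.symm hwc), if_pos rfl,
              if_neg hcu]; ring
          · by_cases h4 : i = u'
            · rw [h4, hxu, if_neg (Ne.symm hvu), if_neg (Ne.symm hwu),
                if_neg (Ne.symm hcu), if_pos rfl]; ring
            · rw [hxo i h1 h2 h3 h4, if_neg h1, if_neg h2, if_neg h3, if_neg h4]; ring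
    rw [Finset.sum_congr rfl fun i _ => hdec i]
    simp only [Finset.sum_add_distrib, Finset.sum_ite_eq' Finset.univ, Finset.mem_univ,
      if_pos]
    ring
  -- denominator
  have hD : (∑ i, x i ^ 2) = 2 + 2*ε^2 := by
    have hdec : ∀ i, x i ^ 2 = (if i = v then (1:ℝ) else 0) + (if i = w then (1:ℝ) else 0)
        + (if i = c then ε^2 else 0) + (if i = u' then ε^2 else 0) := by
      intro i
      by_cases h1 : i = v
      · rw [h1, hxv, if_pos rfl, if_neg hvw, if_neg hvc, if_neg hvu]; ring
      · by_cases h2 : i = w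
        · rw [h2, hxw, if_neg (Ne.symm hvw), if_pos rfl, if_neg hwc, if_neg hwu]; ring
        · by_cases h3 : i = c
          · rw [h3, hxc, if_neg (Ne.symm hvc), if_neg (Ne.symm hwc), if_pos rfl,
              if_neg hcu]; ring
          · by_cases h4 : i = u'
            · rw [h4, hxu, if_neg (Ne.symm hvu), if_neg (Ne.symm hwu),
                if_neg (Ne.symm hcu), if_pos rfl]; ring
            · rw [hxo i h1 h2 h3 h4, if_neg h1, if_neg h2, if_neg h3, if_neg h4]; ring
    rw [Finset.sum_congr rfl fun i _ => hdec i]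
    simp only [Finset.sum_add_distrib, Finset.sum_ite_eq' Finset.univ, Finset.mem_univ,
      if_pos]
    ring
  -- pointwise numerator bound
  have h1e : (0:ℝ) ≤ (1-ε)^2 := sq_nonneg _
  have h4e : (0:ℝ) ≤ 4*ε^2 := by positivity
  have hee : (0:ℝ) ≤ ε^2 := sq_nonneg _
  have hpt : ∀ i j, (if G.Adj i j then (x i - x j)^2 else 0) ≤
      (if i = v ∧ j = c then (1-ε)^2 else 0) + (if i = c ∧ j = v then (1-ε)^2 else 0)
      + (if i = w ∧ j = u' then (1-ε)^2 else 0) + (if i = u' ∧ j = w then (1-ε)^2 else 0)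
      + (if i = c ∧ j = u' then 4*ε^2 else 0) + (if i = u' ∧ j = c then 4*ε^2 else 0)
      + (if G.Adj i j then ε^2 else 0) := by
    intro i j
    have t1 : (0:ℝ) ≤ (if i = v ∧ j = c then (1-ε)^2 else 0) := by
      split_ifs with h
      · exact h1e
      · exact le_refl 0
    have t2 : (0:ℝ) ≤ (if i = c ∧ j = v then (1-ε)^2 else 0) := by
      split_ifs with h
      · exact h1e
      · exact le_refl 0
    have t3 : (0:ℝ) ≤ (if i = w ∧ j = u' then (1-ε)^2 else 0) := by
      split_ifs with h
      · exact h1e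
      · exact le_refl 0
    have t4 : (0:ℝ) ≤ (if i = u' ∧ j = w then (1-ε)^2 else 0) := by
      split_ifs with h
      · exact h1e
      · exact le_refl 0
    have t5 : (0:ℝ) ≤ (if i = c ∧ j = u' then 4*ε^2 else 0) := by
      split_ifs with h
      · exact h4e
      · exact le_refl 0
    have t6 : (0:ℝ) ≤ (if i = u' ∧ j = c then 4*ε^2 else 0) := by
      split_ifs with h
      · exact h4e
      · exact le_refl 0
    have tB : (0:ℝ) ≤ (if G.Adj i j then ε^2 else 0) := by
      split_ifs with h
      · exact hee
      · exact le_refl 0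
    by_cases hadj : G.Adj i j
    · have hij : i ≠ j := G.ne_of_adj hadj
      have hBval : (if G.Adj i j then ε^2 else 0) = ε^2 := if_pos hadj
      rw [if_pos hadj]
      by_cases h1 : i = v
      · have hjc : j = c := (hadjv j).1 (h1 ▸ hadj)
        have hL : (x i - x j)^2 = (1-ε)^2 := by rw [h1, hjc, hxv, hxc]
        have hT : (if i = v ∧ j = c then (1-ε)^2 else 0) = (1-ε)^2 := if_pos ⟨h1, hjc⟩
        rw [hL]
        linarith
      by_cases h2 : j = v
      · have hic : i = c := (hadjv i).1 ((h2 ▸ hadj).symm)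
        have hL : (x i - x j)^2 = (1-ε)^2 := by rw [h2, hic, hxv, hxc]; ring
        have hT : (if i = c ∧ j = v then (1-ε)^2 else 0) = (1-ε)^2 := if_pos ⟨hic, h2⟩
        rw [hL]
        linarith
      by_cases h3 : i = w
      · have hju : j = u' := (hadjw j).1 (h3 ▸ hadj)
        have hL : (x i - x j)^2 = (1-ε)^2 := by rw [h3, hju, hxw, hxu]; ring
        have hT : (if i = w ∧ j = u' then (1-ε)^2 else 0) = (1-ε)^2 := if_pos ⟨h3, hju⟩
        rw [hL]
        linarith
      by_cases h4 : j = w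
      · have hiu : i = u' := (hadjw i).1 ((h4 ▸ hadj).symm)
        have hL : (x i - x j)^2 = (1-ε)^2 := by rw [h4, hiu, hxw, hxu]; ring
        have hT : (if i = u' ∧ j = w then (1-ε)^2 else 0) = (1-ε)^2 := if_pos ⟨hiu, h4⟩
        rw [hL]
        linarith
      by_cases h5 : i = c
      · by_cases h6 : j = u'
        · have hL : (x i - x j)^2 = 4*ε^2 := by rw [h5, h6, hxc, hxu]; ring
          have hT : (if i = c ∧ j = u' then 4*ε^2 else 0) = 4*ε^2 := if_pos ⟨h5, h6⟩
          rw [hL]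
          linarith
        · have hjo : x j = 0 := hxo j h2 h4 (fun hh => hij (h5.trans hh.symm)) h6
          have hL : (x i - x j)^2 = ε^2 := by rw [h5, hjo, hxc]; ring
          rw [hL]
          linarith
      by_cases h6 : i = u'
      · by_cases h7 : j = c
        · have hL : (x i - x j)^2 = 4*ε^2 := by rw [h6, h7, hxc, hxu]; ring
          have hT : (if i = u' ∧ j = c then 4*ε^2 else 0) = 4*ε^2 := if_pos ⟨h6, h7⟩
          rw [hL]
          linarith
        · have hjo : x j = 0 := hxo j h2 h4 h7 (fun hh => hij (h6.trans hh.symm))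
          have hL : (x i - x j)^2 = ε^2 := by rw [h6, hjo, hxu]; ring
          rw [hL]
          linarith
      · have hio : x i = 0 := hxo i h1 h3 h5 h6
        by_cases h7 : j = c
        · have hL : (x i - x j)^2 = ε^2 := by rw [h7, hio, hxc]; ring
          rw [hL]; linarith
        by_cases h8 : j = u'
        · have hL : (x i - x j)^2 = ε^2 := by rw [h8, hio, hxu]; ring
          rw [hL]; linarith
        · have hjo : x j = 0 := hxo j h2 h4 h7 h8
          have hL : (x i - x j)^2 = 0 := by rw [hio, hjo]; ring
          rw [hL]; linarith
    · rw [if_neg hadj]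
      linarith
  -- summing the bound
  have hpair : ∀ (p q : Fin n) (K : ℝ),
      (∑ i : Fin n, ∑ j : Fin n, if i = p ∧ j = q then K else 0) = K := by
    intro p q K
    have hinner : ∀ i : Fin n, (∑ j : Fin n, if i = p ∧ j = q then K else 0)
        = if i = p then K else 0 := by
      intro i
      by_cases hip : i = p
      · simp [hip, Finset.sum_ite_eq' Finset.univ q]
      · simp [hip]
    rw [Finset.sum_congr rfl fun i _ => hinner i]
    simp [Finset.sum_ite_eq' Finset.univ p]
  have hSB : (∑ i : Fin n, ∑ j : Fin n, if G.Adj i j then ε^2 else 0)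
      = (2*(n-1) : ℕ) * ε^2 := by
    have hinner : ∀ i : Fin n, (∑ j : Fin n, if G.Adj i j then ε^2 else 0)
        = (G.degree i : ℝ) * ε^2 := by
      intro i
      rw [← Finset.sum_filter, ← SimpleGraph.neighborFinset_eq_filter, Finset.sum_const,
        nsmul_eq_mul]
      rfl
    rw [Finset.sum_congr rfl fun i _ => hinner i, ← Finset.sum_mul, ← Nat.cast_sum]
    congr 2
    have h1 := SimpleGraph.sum_degrees_eq_twice_card_edges G
    have h2 := hT.card_edgeFinset
    rw [Fintype.card_fin] at h2
    omega
  have hNle : (∑ i, ∑ j, if G.Adj i j then (x i - x j)^2 else 0)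
      ≤ 4*(1-ε)^2 + 8*ε^2 + (2*(n-1) : ℕ) * ε^2 := by
    calc (∑ i, ∑ j, if G.Adj i j then (x i - x j)^2 else 0)
        ≤ ∑ i : Fin n, ∑ j : Fin n,
          ((if i = v ∧ j = c then (1-ε)^2 else 0) + (if i = c ∧ j = v then (1-ε)^2 else 0)
          + (if i = w ∧ j = u' then (1-ε)^2 else 0) + (if i = u' ∧ j = w then (1-ε)^2 else 0)
          + (if i = c ∧ j = u' then 4*ε^2 else 0) + (if i = u' ∧ j = c then 4*ε^2 else 0)
          + (if G.Adj i j then ε^2 else 0)) :=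
          Finset.sum_le_sum fun i _ => Finset.sum_le_sum fun j _ => hpt i j
      _ = 4*(1-ε)^2 + 8*ε^2 + (2*(n-1) : ℕ) * ε^2 := by
          simp only [Finset.sum_add_distrib]
          rw [hpair v c, hpair c v, hpair w u', hpair u' w, hpair c u', hpair u' c, hSB]
          ring
  -- conclusion
  refine ⟨_, ⟨x, ?_, hsum0, rfl⟩, ?_⟩
  · intro hzero
    rw [funext_iff] at hzero
    have := hzero v
    rw [hxv] at this
    norm_num at this
  · rw [hD, div_lt_one (by positivity)]
    have hcast : ((2*(n-1) : ℕ) : ℝ) = 2*((n:ℝ)-1) := by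
      push_cast [Nat.cast_sub (by omega : 1 ≤ n)]
      ring
    have hkey : (2*(n:ℝ)+6)*ε < 8 := by
      rw [hε]
      have h6 : 6/(n:ℝ) ≤ 2 := by rw [div_le_iff₀ hnpos]; linarith
      have : (2*(n:ℝ)+6) * (1/(n:ℝ)) = 2 + 6/(n:ℝ) := by field_simp
      rw [this]
      linarith
    have h8 : (0:ℝ) < 8 - (2*(n:ℝ)+6)*ε := by linarith
    have hprod := mul_pos hεpos h8
    calc (∑ i, ∑ j, if G.Adj i j then (x i - x j)^2 else 0)
        ≤ 4*(1-ε)^2 + 8*ε^2 + (2*(n-1) : ℕ) * ε^2 := hNle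
      _ = 4*(1-ε)^2 + 8*ε^2 + (2*((n:ℝ)-1)) * ε^2 := by rw [hcast]
      _ < 2*(2+2*ε^2) := by nlinarith [hprod]

lemma algConn_star {n : ℕ} (hn : 3 ≤ n) : algConn (Fin n) (starGraph n) = 1 := by
  rw [algConn_eq]
  refine le_antisymm (csInf_le (rset_bddBelow _) (one_mem_rset_star hn))
    (le_csInf ⟨1, one_mem_rset_star hn⟩ fun r hr => one_le_of_mem_rset_star hn hr)

/-- Any tree on `n ≥ 3` vertices has `λ₂ ≤ 1`, with equality iff it is the star
`K_{1,n-1}`. -/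
theorem tree_algConn_le_one (n : ℕ) (hn : 3 ≤ n) (G : SimpleGraph (Fin n))
    (hT : G.IsTree) :
    algConn (Fin n) G ≤ 1 ∧
      (algConn (Fin n) G = 1 ↔ Nonempty (G ≃g starGraph n)) := by
  obtain ⟨v, hdeg⟩ := exists_leaf hT hn
  obtain ⟨c, hv⟩ := Finset.card_eq_one.mp hdeg
  by_cases hcase : ∀ z, z ≠ c → G.Adj c z
  · have hadj := star_structure hT hn hcase
    obtain ⟨e⟩ := star_iso hn hadj
    have h1 : algConn (Fin n) G = 1 := by
      rw [algConn_iso e, algConn_star hn]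
    exact ⟨le_of_eq h1, ⟨fun _ => ⟨e⟩, fun _ => h1⟩⟩
  · push_neg at hcase
    obtain ⟨z, hz1, hz2⟩ := hcase
    obtain ⟨w, u', hw, hd, hu'c⟩ := exists_far_leaf hT hn hz1 hz2
    have hwc : w ≠ c := by
      intro h
      rw [h] at hd
      simp [SimpleGraph.dist_self] at hd
    have hcu : c ≠ u' := Ne.symm hu'c
    have hvw : v ≠ w := by
      intro h
      rw [h] at hv
      exact hcu (Finset.singleton_injective (hv.symm.trans hw))
    have hadjwu : G.Adj w u' := by
      rw [← SimpleGraph.mem_neighborFinset, hw, Finset.mem_singleton]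
    have hvu : v ≠ u' := by
      intro h
      have h2 : G.Adj v w := by rw [h]; exact hadjwu.symm
      have h3 : w ∈ G.neighborFinset v := (SimpleGraph.mem_neighborFinset _ _ _).2 h2
      rw [hv, Finset.mem_singleton] at h3
      exact hwc h3
    obtain ⟨r, hrmem, hrlt⟩ := nonstar_element hT hn hv hw hcu hvw hvu hwc
    have hle : algConn (Fin n) G ≤ r := by
      rw [algConn_eq]
      exact csInf_le (rset_bddBelow _) hrmem
    have hlt1 : algConn (Fin n) G < 1 := lt_of_le_of_lt hle hrlt
    refine ⟨hlt1.le, ?_, ?_⟩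
    · intro h1
      exact absurd h1 (ne_of_lt hlt1)
    · rintro ⟨e⟩
      exfalso
      have h2 := algConn_iso e
      rw [algConn_star hn] at h2
      linarith
end

section
/- If T is a tree with diameter D, then λ₂(T) ≤ 2 − 2cos(π/(D+1)). -/
open scoped Classical
open Finset Real SimpleGraph

lemma sum_interleave (g : ℕ → ℝ) (n : ℕ) :
    ∑ j ∈ range (2*n), g j = ∑ i ∈ range n, (g (2*i) + g (2*i+1)) := by
  induction n with
  | zero => simp
  | succ n ih =>
      have h2 : 2*(n+1) = 2*n + 1 + 1 := by ring
      rw [h2, sum_range_succ, sum_range_succ, ih, sum_range_succ]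
      ring

lemma trig_sum_cos_zero (D : ℕ) :
    ∑ j ∈ range (2*(D+1)), Real.cos (j * Real.pi / (D+1)) = 0 := by
  have h2 : 2*(D+1) = (D+1) + (D+1) := by ring
  rw [h2, Finset.sum_range_add]
  have key : ∀ i ∈ range (D+1),
      Real.cos ((((D+1) + i : ℕ):ℝ) * Real.pi / (D+1))
        = - Real.cos ((i:ℝ) * Real.pi / (D+1)) := by
    intro i _
    have hne : ((D:ℝ)+1) ≠ 0 := by positivity
    have harg : (((D+1) + i : ℕ):ℝ) * Real.pi / (D+1)
        = (i:ℝ) * Real.pi / (D+1) + Real.pi := by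
      push_cast; field_simp; ring
    rw [harg, Real.cos_add_pi]
  rw [Finset.sum_congr rfl key]
  simp

lemma trig_main (D : ℕ) :
    ∑ k ∈ range D,
        (Real.cos ((2*(k:ℝ)+1) * Real.pi / (2*(D+1)))
          - Real.cos ((2*((k:ℝ)+1)+1) * Real.pi / (2*(D+1))))^2
      = (2 - 2*Real.cos (Real.pi / (D+1)))
          * ∑ k ∈ range (D+1), Real.cos ((2*(k:ℝ)+1) * Real.pi / (2*(D+1)))^2 := by
  have hne : ((D:ℝ)+1) ≠ 0 := by positivity
  set θ : ℝ := Real.pi / ((D:ℝ)+1) with hθ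
  -- step b : 2 - 2 cos θ = 4 sin(θ/2)^2
  have hb : 2 - 2*Real.cos θ = 4 * Real.sin (θ/2)^2 := by
    have h1 := Real.cos_sq (θ/2)
    have h2 := Real.sin_sq_add_cos_sq (θ/2)
    have h3 : 2*(θ/2) = θ := by ring
    rw [h3] at h1
    linarith
  -- step a : pointwise difference formula
  have ha : ∀ k : ℕ,
      (Real.cos ((2*(k:ℝ)+1) * Real.pi / (2*(D+1)))
        - Real.cos ((2*((k:ℝ)+1)+1) * Real.pi / (2*(D+1))))^2
      = 4 * Real.sin (θ/2)^2 * Real.sin (((k:ℝ)+1)*θ)^2 := by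
    intro k
    have hcc := Real.cos_sub_cos ((2*(k:ℝ)+1) * Real.pi / (2*(D+1)))
      ((2*((k:ℝ)+1)+1) * Real.pi / (2*(D+1)))
    have e1 : ((2*(k:ℝ)+1) * Real.pi / (2*(D+1)) + (2*((k:ℝ)+1)+1) * Real.pi / (2*(D+1)))/2
        = ((k:ℝ)+1)*θ := by rw [hθ]; field_simp; ring
    have e2 : ((2*(k:ℝ)+1) * Real.pi / (2*(D+1)) - (2*((k:ℝ)+1)+1) * Real.pi / (2*(D+1)))/2
        = -(θ/2) := by rw [hθ]; field_simp; ring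
    rw [e1, e2, Real.sin_neg] at hcc
    rw [hcc]; ring
  rw [Finset.sum_congr rfl (fun k _ => ha k), ← Finset.mul_sum, hb]
  -- reduce to sum identity
  have hcsq : ∀ k : ℕ, Real.cos ((2*(k:ℝ)+1) * Real.pi / (2*(D+1)))^2
      = 1/2 + Real.cos ((2*(k:ℝ)+1)*θ)/2 := by
    intro k
    rw [Real.cos_sq]
    have harg : 2*((2*(k:ℝ)+1) * Real.pi / (2*(D+1))) = (2*(k:ℝ)+1)*θ := by
      rw [hθ]; field_simp
    rw [harg]
  have hssq : ∀ k : ℕ, Real.sin (((k:ℝ)+1)*θ)^2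
      = 1/2 - Real.cos ((2*((k:ℝ)+1))*θ)/2 := by
    intro k
    have h1 := Real.cos_sq (((k:ℝ)+1)*θ)
    have h2 := Real.sin_sq_add_cos_sq (((k:ℝ)+1)*θ)
    have h3 : 2*(((k:ℝ)+1)*θ) = (2*((k:ℝ)+1))*θ := by ring
    rw [h3] at h1
    linarith
  congr 1
  rw [Finset.sum_congr rfl (fun k _ => hssq k), Finset.sum_congr rfl (fun k _ => hcsq k)]
  -- the cosine sums
  have hinter := sum_interleave (fun j => Real.cos ((j:ℝ) * Real.pi / (D+1))) (D+1)
  rw [trig_sum_cos_zero D] at hinter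
  -- split: ∑_{i<D+1} cos(2i θ) + ∑ cos((2i+1) θ) with θ form
  have hE : ∑ i ∈ range (D+1), Real.cos (((2*i : ℕ):ℝ) * Real.pi / (D+1))
      = 1 + ∑ i ∈ range D, Real.cos ((2*((i:ℝ)+1))*θ) := by
    rw [Finset.sum_range_succ' (fun i => Real.cos (((2*i : ℕ):ℝ) * Real.pi / (D+1))) D]
    have h0 : Real.cos (((2*0 : ℕ):ℝ) * Real.pi / (D+1)) = 1 := by norm_num
    rw [h0, add_comm]
    congr 1
    refine Finset.sum_congr rfl (fun i _ => ?_)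
    congr 1
    rw [hθ]; push_cast; ring
  have hO : ∑ i ∈ range (D+1), Real.cos (((2*i+1 : ℕ):ℝ) * Real.pi / (D+1))
      = ∑ i ∈ range (D+1), Real.cos ((2*(i:ℝ)+1)*θ) := by
    refine Finset.sum_congr rfl (fun i _ => ?_)
    congr 1
    rw [hθ]; push_cast; ring
  have hsplit := hinter.symm
  rw [Finset.sum_add_distrib, hE, hO] at hsplit
  -- now pure algebra on sums
  rw [Finset.sum_sub_distrib, Finset.sum_add_distrib, ← Finset.sum_div, ← Finset.sum_div]
  simp only [Finset.sum_const, card_range, nsmul_eq_mul]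
  have hhalf : ∑ x ∈ range (D+1), Real.cos ((2*(x:ℝ)+1)*θ)/2
      = (∑ x ∈ range (D+1), Real.cos ((2*(x:ℝ)+1)*θ))/2 := (Finset.sum_div _ _ _).symm
  rw [hhalf]
  push_cast
  linarith [hsplit]

lemma trig_sum_f (D : ℕ) :
    ∑ k ∈ range (D+1), Real.cos ((2*k+1) * Real.pi / (2*(D+1))) = 0 := by
  have h := Finset.sum_range_reflect
    (fun k => Real.cos ((2*(k:ℝ)+1) * Real.pi / (2*(D+1)))) (D+1)
  simp only [Nat.add_sub_cancel] at h
  have key : ∀ j ∈ range (D+1),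
      Real.cos ((2*((D - j : ℕ):ℝ)+1) * Real.pi / (2*(D+1)))
        = - Real.cos ((2*(j:ℝ)+1) * Real.pi / (2*(D+1))) := by
    intro j hj
    rw [mem_range, Nat.lt_succ_iff] at hj
    have hc : ((D - j : ℕ):ℝ) = (D:ℝ) - j := by
      exact_mod_cast Nat.cast_sub (R := ℝ) hj
    have hne : (2*((D:ℝ)+1)) ≠ 0 := by positivity
    have harg : (2*((D:ℝ) - j)+1) * Real.pi / (2*(D+1))
        = Real.pi - (2*(j:ℝ)+1) * Real.pi / (2*(D+1)) := by
      field_simp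
      ring
    rw [hc, harg, Real.cos_pi_sub]
  rw [Finset.sum_congr rfl key, Finset.sum_neg_distrib] at h
  linarith


variable {V : Type*} {G : SimpleGraph V}

lemma dist_getVert_le (hconn : G.Connected) {u w : V} (p : G.Walk u w) (k : ℕ) :
    G.dist u (p.getVert k) ≤ k := by
  induction k with
  | zero => simp [Walk.getVert_zero]
  | succ k ih =>
    by_cases hk : k < p.length
    · have hadj := p.adj_getVert_succ hk
      have h1 : G.dist (p.getVert k) (p.getVert (k+1)) ≤ 1 := by
        simpa using G.dist_le (Walk.cons hadj Walk.nil)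
      have := hconn.dist_triangle (u := u) (v := p.getVert k) (w := p.getVert (k+1))
      omega
    · have heq : p.getVert (k+1) = p.getVert k := by
        rw [p.getVert_of_length_le (by omega), p.getVert_of_length_le (by omega)]
      rw [heq]; omega

lemma geodesic_getVert (hconn : G.Connected) {u w : V} (p : G.Walk u w)
    (hp : p.length = G.dist u w) {k : ℕ} (hk : k ≤ p.length) :
    G.dist u (p.getVert k) = k ∧ G.dist (p.getVert k) w = p.length - k := by
  have h1 : G.dist u (p.getVert k) ≤ k := dist_getVert_le hconn p k
  have h2 : G.dist (p.getVert k) w ≤ p.length - k := by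
    have h := dist_getVert_le hconn p.reverse (p.length - k)
    rw [p.getVert_reverse] at h
    have he : p.length - (p.length - k) = k := by omega
    rw [he] at h
    rwa [dist_comm]
  have h3 : p.length ≤ G.dist u (p.getVert k) + G.dist (p.getVert k) w := by
    rw [hp]
    exact hconn.dist_triangle
  constructor <;> omega

lemma edges_getVert {u w : V} (p : G.Walk u w) {e : Sym2 V} (he : e ∈ p.edges) :
    ∃ k < p.length, e = s(p.getVert k, p.getVert (k+1)) := by
  induction p with
  | nil => simp at he
  | @cons x y z h q ih =>
    rw [Walk.edges_cons, List.mem_cons] at he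
    rcases he with he | he
    · refine ⟨0, by simp, ?_⟩
      rw [Walk.getVert_zero, Walk.getVert_cons_succ, Walk.getVert_zero]
      exact he
    · obtain ⟨k, hk, rfl⟩ := ih he
      refine ⟨k+1, by simp; omega, ?_⟩
      rw [Walk.getVert_cons_succ, Walk.getVert_cons_succ]



lemma notReach_dist (hT : G.IsTree) {a b t : V} (hab : G.Adj a b)
    (h : ¬ (G.deleteEdges {s(a,b)}).Reachable a t) :
    G.dist a t = G.dist b t + 1 := by
  have hconn := hT.isConnected
  have hat : a ≠ t := by rintro rfl; exact h (Reachable.refl a)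
  have hup : G.dist a t ≤ G.dist b t + 1 := by
    have h1 : G.dist a b ≤ 1 := by simpa using G.dist_le (Walk.cons hab Walk.nil)
    have h2 := hconn.dist_triangle (u := a) (v := b) (w := t)
    omega
  obtain ⟨W, hWp, hWl⟩ := hconn.exists_path_of_dist a t
  cases W with
  | nil => exact absurd rfl hat
  | @cons _ c _ h' W' =>
    rw [Walk.cons_isPath_iff] at hWp
    have hW'e : s(a,b) ∉ W'.edges := fun hmem =>
      hWp.2 (Walk.fst_mem_support_of_mem_edges W' hmem)
    by_cases hcb : c = b
    · subst hcb
      have hle : G.dist c t ≤ W'.length := G.dist_le W'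
      rw [Walk.length_cons] at hWl
      omega
    · exfalso
      apply h
      have hcons : s(a,b) ∉ (Walk.cons h' W').edges := by
        rw [Walk.edges_cons, List.mem_cons]
        rintro (hh | hh)
        · exact hcb (Sym2.congr_right.mp hh.symm)
        · exact hW'e hh
      exact ⟨(Walk.cons h' W').toDeleteEdges {s(a,b)}
        (fun e' he' => by rintro rfl; exact hcons he')⟩

lemma reach_side (hT : G.IsTree) {a b : V} (hab : G.Adj a b) (t : V) :
    (G.deleteEdges {s(a,b)}).Reachable a t ∨ (G.deleteEdges {s(a,b)}).Reachable b t := by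
  obtain ⟨W, hWp, -⟩ := hT.isConnected.exists_path_of_dist a t
  cases W with
  | nil => exact Or.inl (Reachable.refl a)
  | @cons _ c _ h' W' =>
    rw [Walk.cons_isPath_iff] at hWp
    have hW'e : s(a,b) ∉ W'.edges := fun hmem =>
      hWp.2 (Walk.fst_mem_support_of_mem_edges W' hmem)
    by_cases hcb : c = b
    · subst hcb
      exact Or.inr ⟨W'.toDeleteEdges _ (fun e' he' => by rintro rfl; exact hW'e he')⟩
    · refine Or.inl ?_
      have hcons : s(a,b) ∉ (Walk.cons h' W').edges := by
        rw [Walk.edges_cons, List.mem_cons]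
        rintro (hh | hh)
        · exact hcb (Sym2.congr_right.mp hh.symm)
        · exact hW'e hh
      exact ⟨(Walk.cons h' W').toDeleteEdges {s(a,b)}
        (fun e' he' => by rintro rfl; exact hcons he')⟩

lemma tree_key (hT : G.IsTree) {a b u w : V} (hab : G.Adj a b)
    {p : G.Walk u w} (he : s(a,b) ∉ p.edges) :
    G.dist u a + G.dist b w = G.dist u b + G.dist a w := by
  have hbr : ¬ (G.deleteEdges {s(a,b)}).Reachable a b := by
    have hB := (isAcyclic_iff_forall_adj_isBridge.mp hT.IsAcyclic) hab
    rw [isBridge_iff] at hB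
    exact hB
  have huw : (G.deleteEdges {s(a,b)}).Reachable u w :=
    ⟨p.toDeleteEdges {s(a,b)} (fun e' he' => by rintro rfl; exact he he')⟩
  have swap : ({s(b,a)} : Set (Sym2 V)) = {s(a,b)} := by rw [Sym2.eq_swap]
  rcases reach_side hT hab u with hau | hbu
  · have haw : (G.deleteEdges {s(a,b)}).Reachable a w := hau.trans huw
    have h1 : ¬ (G.deleteEdges {s(b,a)}).Reachable b u := by
      rw [swap]; exact fun hr => hbr (hau.trans hr.symm)
    have h2 : ¬ (G.deleteEdges {s(b,a)}).Reachable b w := by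
      rw [swap]; exact fun hr => hbr (haw.trans hr.symm)
    have e1 := notReach_dist hT hab.symm h1
    have e2 := notReach_dist hT hab.symm h2
    rw [SimpleGraph.dist_comm (u := u) (v := a), SimpleGraph.dist_comm (u := u) (v := b)]
    omega
  · have h1 : ¬ (G.deleteEdges {s(a,b)}).Reachable a u :=
      fun hr => hbr (hr.trans hbu.symm)
    have h2 : ¬ (G.deleteEdges {s(a,b)}).Reachable a w :=
      fun hr => hbr (hr.trans (hbu.trans huw).symm)
    have e1 := notReach_dist hT hab h1
    have e2 := notReach_dist hT hab h2
    rw [SimpleGraph.dist_comm (u := u) (v := a), SimpleGraph.dist_comm (u := u) (v := b)]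
    omega

set_option maxHeartbeats 2000000 in
/-- If `T` is a tree with diameter `D`, then `λ₂(T) ≤ 2 - 2cos(π/(D+1))`. -/
theorem tree_algConn_le_diam_bound (n D : ℕ) (G : SimpleGraph (Fin n))
    (hT : G.IsTree) (hD : G.diam = D) :
    algConn (Fin n) G ≤ 2 - 2 * Real.cos (Real.pi / (D + 1)) := by
  have hconn := hT.isConnected
  haveI hne : Nonempty (Fin n) := hconn.nonempty
  set S : Set ℝ := {r : ℝ | ∃ x : Fin n → ℝ, x ≠ 0 ∧ (∑ i, x i) = 0 ∧
    r = (∑ i, ∑ j, if G.Adj i j then (x i - x j) ^ 2 else 0) /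
        (2 * ∑ i, (x i) ^ 2)} with hS
  have halg : algConn (Fin n) G = sInf S := rfl
  have hbdd : BddBelow S := by
    refine ⟨0, ?_⟩
    rintro r ⟨x, -, -, rfl⟩
    apply div_nonneg
    · exact Finset.sum_nonneg fun i _ => Finset.sum_nonneg fun j _ => by positivity
    · positivity
  rcases Nat.eq_zero_or_pos D with hD0 | hD1
  · -- degenerate case : diameter 0
    subst hD0
    have hsub : Subsingleton (Fin n) := by
      rcases (SimpleGraph.diam_eq_zero.mp hD) with htop | hs
      · obtain ⟨a, b, hab⟩ := G.exists_edist_eq_ediam_of_finite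
        rw [htop] at hab
        exact absurd (SimpleGraph.edist_ne_top_iff_reachable.mpr (hconn a b)) (by simp [hab])
      · exact hs
    have hn1 : n = 1 := by
      have h1 : Fintype.card (Fin n) ≤ 1 := Fintype.card_le_one_iff_subsingleton.mpr hsub
      have h2 : 0 < Fintype.card (Fin n) := Fintype.card_pos
      simp only [Fintype.card_fin] at h1 h2
      omega
    subst hn1
    have hempty : S = ∅ := by
      ext r
      simp only [Set.mem_setOf_eq, Set.mem_empty_iff_false, iff_false, hS]
      rintro ⟨x, hx0, hsum, -⟩
      apply hx0
      have : x 0 = 0 := by simpa [Fin.sum_univ_one] using hsum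
      funext i
      rw [Subsingleton.elim i 0, this]
      rfl
    rw [halg, hempty, Real.sInf_empty]
    have : Real.cos (Real.pi / ((0:ℕ) + 1)) = -1 := by norm_num [Real.cos_pi]
    rw [this]; norm_num
  · -- main case : D ≥ 1
    obtain ⟨u, w, huw⟩ := G.exists_dist_eq_diam
    rw [hD] at huw
    obtain ⟨p, hpath, hplen⟩ := hconn.exists_path_of_dist u w
    rw [huw] at hplen
    set v : ℕ → Fin n := fun k => p.getVert k with hv
    have hgeo : ∀ k ≤ D, G.dist u (v k) = k ∧ G.dist (v k) w = D - k := by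
      intro k hk
      have h := geodesic_getVert hconn p (hplen.trans huw.symm) (k := k) (by omega)
      rwa [hplen] at h
    have hvinj : ∀ k ≤ D, ∀ l ≤ D, v k = v l → k = l := by
      intro k hk l hl hkl
      have h1 := (hgeo k hk).1
      have h2 := (hgeo l hl).1
      rw [hkl] at h1
      omega
    set δ : Fin n → ℕ := fun a => (D + G.dist u a) - G.dist a w with hδ
    have ht : ∀ a : Fin n, G.dist a w ≤ D + G.dist u a := by
      intro a
      have h := hconn.dist_triangle (u := a) (v := u) (w := w)
      rw [SimpleGraph.dist_comm (u := a) (v := u), huw] at h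
      omega
    have ht2 : ∀ a : Fin n, G.dist u a ≤ D + G.dist a w := by
      intro a
      have h := hconn.dist_triangle (u := u) (v := w) (w := a)
      rw [SimpleGraph.dist_comm (u := w) (v := a), huw] at h
      omega
    have hδv : ∀ k ≤ D, δ (v k) = 2*k := by
      intro k hk
      obtain ⟨e1, e2⟩ := hgeo k hk
      simp only [hδ]
      rw [e1, SimpleGraph.dist_comm (u := v k) (v := w)]
      rw [SimpleGraph.dist_comm (u := w) (v := v k), e2]
      omega
    have hedge : ∀ a b : Fin n, G.Adj a b → δ a ≠ δ b →
        ∃ k < D, s(a,b) = s(v k, v (k+1)) := by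
      intro a b hab hnd
      by_cases hmem : s(a,b) ∈ p.edges
      · obtain ⟨k, hk, hkeq⟩ := edges_getVert p hmem
        exact ⟨k, by omega, hkeq⟩
      · exfalso
        apply hnd
        have hkey := tree_key hT hab hmem
        have h1 := ht a
        have h2 := ht b
        simp only [hδ]
        omega
    set f : ℕ → ℝ := fun k => Real.cos ((2*(k:ℝ)+1) * Real.pi / (2*(D+1))) with hf
    have hπ := Real.pi_pos
    have hf0 : 0 < f 0 := by
      rw [hf]
      apply Real.cos_pos_of_mem_Ioo
      constructor
      · have : (0:ℝ) < (2*((0:ℕ):ℝ)+1) * Real.pi / (2*(D+1)) := by positivity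
        linarith
      · show (2*((0:ℕ):ℝ)+1) * Real.pi / (2*(D+1)) < Real.pi / 2
        rw [Nat.cast_zero]
        rw [div_lt_div_iff₀ (by positivity) (by norm_num)]
        have hD' : (1:ℝ) ≤ (D:ℝ) := by exact_mod_cast hD1
        nlinarith
    have hfD : f D = - f 0 := by
      have hne' : ((D:ℝ)+1) ≠ 0 := by positivity
      simp only [hf, Nat.cast_zero]
      have harg : (2*(D:ℝ)+1) * Real.pi / (2*((D:ℝ)+1))
          = Real.pi - (2*(0:ℝ)+1) * Real.pi / (2*((D:ℝ)+1)) := by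
        field_simp
        ring
      rw [harg, Real.cos_pi_sub]
    set c : ℝ := (∑ i, f (δ i / 2)) / n with hc
    set x : Fin n → ℝ := fun a => f (δ a / 2) - c with hx
    have hnn : (0:ℝ) < n := by
      obtain ⟨i⟩ := hne
      have : 0 < n := lt_of_le_of_lt (Nat.zero_le _) i.isLt
      exact_mod_cast this
    have hxsum : ∑ i, x i = 0 := by
      simp only [hx, Finset.sum_sub_distrib, Finset.sum_const, Finset.card_univ,
        Fintype.card_fin, nsmul_eq_mul, hc]
      field_simp
      ring
    have hxv : ∀ k ≤ D, x (v k) = f k - c := by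
      intro k hk
      simp only [hx]
      rw [hδv k hk]
      norm_num
    have hx0 : x ≠ 0 := by
      intro h
      have h1 : x (v 0) = 0 := by rw [h]; rfl
      have h2 : x (v D) = 0 := by rw [h]; rfl
      rw [hxv 0 (by omega)] at h1
      rw [hxv D le_rfl] at h2
      rw [hfD] at h2
      linarith
    have hmem : ((∑ i, ∑ j, if G.Adj i j then (x i - x j) ^ 2 else 0) /
        (2 * ∑ i, (x i) ^ 2)) ∈ S := ⟨x, hx0, hxsum, rfl⟩
    rw [halg]
    refine le_trans (csInf_le hbdd hmem) ?_
    -- now the Rayleigh quotient bound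
    have hsum0 := trig_sum_f D
    have hfsum0 : ∑ k ∈ range (D+1), f k = 0 := hsum0
    -- denominator bounds
    have hden1 : ∑ k ∈ range (D+1), (f k)^2 ≤ ∑ i, (x i)^2 := by
      have hstep1 : ∑ i ∈ (range (D+1)).image (fun k => v k), (x i)^2 ≤ ∑ i, (x i)^2 :=
        Finset.sum_le_sum_of_subset_of_nonneg (Finset.subset_univ _)
          (fun i _ _ => sq_nonneg _)
      have hstep2 : ∑ i ∈ (range (D+1)).image (fun k => v k), (x i)^2
          = ∑ k ∈ range (D+1), (x (v k))^2 := by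
        apply Finset.sum_image
        intro k hk l hl hkl
        exact hvinj k (by simpa using Nat.lt_succ_iff.mp (mem_range.mp hk)) l
          (by simpa using Nat.lt_succ_iff.mp (mem_range.mp hl)) hkl
      have hstep3 : ∑ k ∈ range (D+1), (x (v k))^2 = ∑ k ∈ range (D+1), (f k - c)^2 := by
        refine Finset.sum_congr rfl (fun k hk => ?_)
        rw [hxv k (Nat.lt_succ_iff.mp (mem_range.mp hk))]
      have hstep4 : ∑ k ∈ range (D+1), (f k - c)^2
          = ∑ k ∈ range (D+1), (f k)^2 + (D+1)*c^2 := by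
        have expand : ∀ k : ℕ, (f k - c)^2 = f k^2 - 2*c*f k + c^2 := fun k => by ring
        rw [Finset.sum_congr rfl (fun k _ => expand k)]
        rw [Finset.sum_add_distrib, Finset.sum_sub_distrib, ← Finset.mul_sum, hfsum0,
          Finset.sum_const, card_range, nsmul_eq_mul]
        push_cast
        ring
      have hc2 : 0 ≤ ((D:ℝ)+1)*c^2 :=
        mul_nonneg (by positivity) (sq_nonneg c)
      calc ∑ k ∈ range (D+1), (f k)^2
          ≤ ∑ k ∈ range (D+1), (f k)^2 + (D+1)*c^2 := by linarith
        _ = ∑ k ∈ range (D+1), (f k - c)^2 := hstep4.symm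
        _ = ∑ k ∈ range (D+1), (x (v k))^2 := hstep3.symm
        _ = ∑ i ∈ (range (D+1)).image (fun k => v k), (x i)^2 := hstep2.symm
        _ ≤ ∑ i, (x i)^2 := hstep1
    have hden0 : 0 < ∑ k ∈ range (D+1), (f k)^2 := by
      apply Finset.sum_pos' (fun k _ => sq_nonneg _)
      exact ⟨0, mem_range.mpr (by omega), by positivity⟩
    -- numerator bound
    set F : Fin n × Fin n → ℝ :=
      fun q => if G.Adj q.1 q.2 then (x q.1 - x q.2)^2 else 0 with hF
    have hNF : (∑ i, ∑ j, if G.Adj i j then (x i - x j) ^ 2 else 0)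
        = ∑ q ∈ Finset.univ ×ˢ Finset.univ, F q := by
      rw [Finset.sum_product]
    set T' : Finset (Fin n × Fin n) :=
      ((range D) ×ˢ (Finset.univ : Finset Bool)).image
        (fun q => if q.2 then (v q.1, v (q.1+1)) else (v (q.1+1), v q.1)) with hT'
    have hsupp : ∀ q ∈ Finset.univ ×ˢ (Finset.univ : Finset (Fin n)), q ∉ T' → F q = 0 := by
      intro q _ hq
      by_contra hFq
      have hadj : G.Adj q.1 q.2 := by
        by_contra hna
        exact hFq (by simp [hF, hna])
      have hxne : x q.1 ≠ x q.2 := by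
        intro hxe
        exact hFq (by simp [hF, hadj, hxe])
      have hdne : δ q.1 ≠ δ q.2 := by
        intro hde
        exact hxne (by simp [hx, hde])
      obtain ⟨k, hk, hke⟩ := hedge q.1 q.2 hadj hdne
      rw [Sym2.eq_iff] at hke
      apply hq
      rw [hT', Finset.mem_image]
      rcases hke with ⟨h1, h2⟩ | ⟨h1, h2⟩
      · exact ⟨(k, true), by simp [Finset.mem_product, mem_range, hk], by simp [← h1, ← h2]⟩
      · exact ⟨(k, false), by simp [Finset.mem_product, mem_range, hk], by simp [← h1, ← h2]⟩
    have hNT : (∑ q ∈ Finset.univ ×ˢ Finset.univ, F q) = ∑ q ∈ T', F q := by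
      refine (Finset.sum_subset (Finset.subset_univ _ |>.trans ?_) hsupp).symm
      · intro q hq; exact Finset.mem_product.mpr ⟨Finset.mem_univ _, Finset.mem_univ _⟩
    have hTsum : ∑ q ∈ T', F q
        = ∑ q ∈ (range D) ×ˢ (Finset.univ : Finset Bool),
            F (if q.2 then (v q.1, v (q.1+1)) else (v (q.1+1), v q.1)) := by
      apply Finset.sum_image
      rintro ⟨k, b⟩ hk ⟨l, b'⟩ hl hkl
      have hkD : k < D := (Finset.mem_product.mp hk).1 |> mem_range.mp
      have hlD : l < D := (Finset.mem_product.mp hl).1 |> mem_range.mp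
      cases b <;> cases b' <;> simp only [if_true, if_false, Bool.false_eq_true] at hkl <;>
        rw [Prod.mk.injEq] at hkl ⊢
      · have e1 := hvinj (k+1) (by omega) (l+1) (by omega) hkl.1
        exact ⟨by omega, rfl⟩
      · have e1 := hvinj (k+1) (by omega) l (by omega) hkl.1
        have e2 := hvinj k (by omega) (l+1) (by omega) hkl.2
        omega
      · have e1 := hvinj k (by omega) (l+1) (by omega) hkl.1
        have e2 := hvinj (k+1) (by omega) l (by omega) hkl.2
        omega
      · have e1 := hvinj k (by omega) l (by omega) hkl.1
        exact ⟨by omega, rfl⟩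
    have hterm : ∀ k, k < D → F (v k, v (k+1)) = (f k - f (k+1))^2
        ∧ F (v (k+1), v k) = (f (k+1) - f k)^2 := by
      intro k hk
      have hadj : G.Adj (v k) (v (k+1)) := p.adj_getVert_succ (by omega)
      have hx1 := hxv k (by omega)
      have hx2 := hxv (k+1) (by omega)
      constructor
      · simp only [hF, hadj, if_true]
        rw [hx1, hx2]; ring
      · simp only [hF, hadj.symm, if_true]
        rw [hx1, hx2]; ring
    have hTeval : ∑ q ∈ (range D) ×ˢ (Finset.univ : Finset Bool),
            F (if q.2 then (v q.1, v (q.1+1)) else (v (q.1+1), v q.1))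
        = 2 * ∑ k ∈ range D, (f k - f (k+1))^2 := by
      rw [Finset.sum_product]
      rw [Finset.mul_sum]
      refine Finset.sum_congr rfl (fun k hk => ?_)
      have hkD := mem_range.mp hk
      obtain ⟨e1, e2⟩ := hterm k hkD
      rw [Fintype.sum_bool]
      simp only [if_true, if_false, Bool.false_eq_true]
      rw [e1, e2]
      ring
    have hN : (∑ i, ∑ j, if G.Adj i j then (x i - x j) ^ 2 else 0)
        = 2 * ∑ k ∈ range D, (f k - f (k+1))^2 := by
      rw [hNF, hNT, hTsum, hTeval]
    -- trig identity
    have hmain := trig_main D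
    have hmain' : ∑ k ∈ range D, (f k - f (k+1))^2
        = (2 - 2*Real.cos (Real.pi / (D+1))) * ∑ k ∈ range (D+1), (f k)^2 := by
      rw [← hmain]
      refine Finset.sum_congr rfl (fun k _ => ?_)
      congr 2
      rw [hf]
      push_cast
      ring_nf
    -- final assembly
    have hlam : (0:ℝ) ≤ 2 - 2*Real.cos (Real.pi / (D+1)) := by
      have := Real.cos_le_one (Real.pi / (D+1))
      linarith
    have hxden : 0 < 2 * ∑ i, (x i)^2 := by linarith
    rw [div_le_iff₀ hxden]
    rw [hN, hmain']
    have h1 : (2 - 2*Real.cos (Real.pi / (D+1))) * ∑ k ∈ range (D+1), (f k)^2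
        ≤ (2 - 2*Real.cos (Real.pi / (D+1))) * ∑ i, (x i)^2 :=
      mul_le_mul_of_nonneg_left hden1 hlam
    nlinarith [h1]
end

section
/- If a cubic graph G contains the graph T_K (two perfect binary trees of height K joined at the roots by an edge) as a subgraph, then G has two vertices at distance at least K, hence its diameter is at least K. -/
open scoped Classical

namespace TKAux

lemma log2_one : Nat.log2 1 = 0 :=
  Nat.lt_one_iff.1 ((Nat.log2_lt one_ne_zero).2 (by norm_num))

lemma two_pow_succ_sub_one_pos (K : ℕ) : 0 < 2 ^ (K + 1) - 1 := by
  have : 2 ≤ 2 ^ (K + 1) := Nat.one_lt_two_pow_iff.2 (by omega)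
  omega

/-- Depth increases by at most one along a `TK` edge. -/
lemma depth_succ {K : ℕ} {a b : Bool × Fin (2 ^ (K + 1) - 1)} (h : (TK K).Adj a b) :
    Nat.log2 ((b.2 : ℕ) + 1) ≤ Nat.log2 ((a.2 : ℕ) + 1) + 1 := by
  rw [TK, SimpleGraph.fromRel_adj] at h
  set l := Nat.log2 ((a.2 : ℕ) + 1) with hl
  have hlt : (a.2 : ℕ) + 1 < 2 ^ (l + 1) := Nat.lt_log2_self
  obtain ⟨-, h | h⟩ := h
  · rcases h with ⟨-, h⟩ | ⟨-, hb, -⟩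
    · -- child step
      have h2 : (b.2 : ℕ) + 1 < 2 ^ (l + 2) := by
        have : 2 ^ (l + 2) = 2 * 2 ^ (l + 1) := by ring
        omega
      have := (Nat.log2_lt (by omega)).2 h2
      omega
    · simp [hb, log2_one]
  · rcases h with ⟨-, h⟩ | ⟨hb, -, -⟩
    · -- parent step : b is the parent of a, so b.2 + 1 ≤ a.2 + 1
      have hle : (b.2 : ℕ) + 1 ≤ (a.2 : ℕ) + 1 := by omega
      have h1 : 2 ^ Nat.log2 ((b.2 : ℕ) + 1) ≤ (b.2 : ℕ) + 1 :=
        Nat.log2_self_le (by omega)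
      have : Nat.log2 ((b.2 : ℕ) + 1) ≤ l :=
        (Nat.le_log2 (by omega)).2 (le_trans h1 hle)
      omega
    · simp [hb, log2_one]

lemma adj_child {K : ℕ} (t : Bool) (i j : Fin (2 ^ (K + 1) - 1))
    (h : (j : ℕ) + 1 = 2 * ((i : ℕ) + 1) ∨ (j : ℕ) + 1 = 2 * ((i : ℕ) + 1) + 1) :
    (TK K).Adj (t, i) (t, j) := by
  rw [TK, SimpleGraph.fromRel_adj]
  refine ⟨?_, Or.inl (Or.inl ⟨rfl, h⟩)⟩
  intro hc
  have : (i : ℕ) = (j : ℕ) := by rw [Prod.mk.injEq] at hc; rw [hc.2]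
  omega

lemma adj_parent {K : ℕ} (t : Bool) (i j : Fin (2 ^ (K + 1) - 1))
    (h : (i : ℕ) + 1 = 2 * ((j : ℕ) + 1) ∨ (i : ℕ) + 1 = 2 * ((j : ℕ) + 1) + 1) :
    (TK K).Adj (t, i) (t, j) := by
  rw [TK, SimpleGraph.fromRel_adj]
  refine ⟨?_, Or.inr (Or.inl ⟨rfl, h⟩)⟩
  intro hc
  have : (i : ℕ) = (j : ℕ) := by rw [Prod.mk.injEq] at hc; rw [hc.2]
  omega

lemma adj_cross {K : ℕ} (t : Bool) (i j : Fin (2 ^ (K + 1) - 1))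
    (hi : (i : ℕ) = 0) (hj : (j : ℕ) = 0) :
    (TK K).Adj (t, i) (!t, j) := by
  rw [TK, SimpleGraph.fromRel_adj]
  refine ⟨?_, Or.inl (Or.inr ⟨hi, hj, (Bool.not_ne_self t).symm⟩)⟩
  intro hc
  have := congrArg Prod.fst hc
  simp at this

/-- Key cubic-graph step: if `a` has at least 3 neighbours in `TK K`, every
`G`-neighbour of `f a` is the image of a `TK`-neighbour of `a`. -/
lemma key {K n : ℕ} (G : SimpleGraph (Fin n)) (hcubic : ∀ v, G.degree v = 3)
    (f : Bool × Fin (2 ^ (K + 1) - 1) → Fin n) (hinj : Function.Injective f)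
    (hhom : ∀ a b, (TK K).Adj a b → G.Adj (f a) (f b))
    (a : Bool × Fin (2 ^ (K + 1) - 1)) (S : Finset (Bool × Fin (2 ^ (K + 1) - 1)))
    (hadj : ∀ b ∈ S, (TK K).Adj a b) (hcard : 3 ≤ S.card)
    (x : Fin n) (hx : G.Adj (f a) x) :
    ∃ b, (TK K).Adj a b ∧ x = f b := by
  have hsub : S.image f ⊆ G.neighborFinset (f a) := by
    intro y hy
    obtain ⟨b, hb, rfl⟩ := Finset.mem_image.1 hy
    exact (SimpleGraph.mem_neighborFinset _ _ _).2 (hhom _ _ (hadj b hb))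
  have hc : (G.neighborFinset (f a)).card ≤ (S.image f).card := by
    rw [Finset.card_image_of_injective _ hinj,
      SimpleGraph.card_neighborFinset_eq_degree, hcubic]
    exact hcard
  have heq := Finset.eq_of_subset_of_card_le hsub hc
  have hxmem : x ∈ S.image f := by
    rw [heq]; exact (SimpleGraph.mem_neighborFinset _ _ _).2 hx
  obtain ⟨b, hb, rfl⟩ := Finset.mem_image.1 hxmem
  exact ⟨b, hadj b hb, rfl⟩

/-- Every `G`-neighbour of the image of a non-leaf vertex of `TK K` is the image
of a `TK`-neighbour. -/
lemma neighbor_of_adj {K n : ℕ} (hK : 1 ≤ K) (G : SimpleGraph (Fin n))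
    (hcubic : ∀ v, G.degree v = 3)
    (f : Bool × Fin (2 ^ (K + 1) - 1) → Fin n) (hinj : Function.Injective f)
    (hhom : ∀ a b, (TK K).Adj a b → G.Adj (f a) (f b))
    (t : Bool) (i : Fin (2 ^ (K + 1) - 1)) (hi : (i : ℕ) + 1 < 2 ^ K)
    (x : Fin n) (hx : G.Adj (f (t, i)) x) :
    ∃ b, (TK K).Adj (t, i) b ∧ x = f b := by
  have hN : 2 ^ K < 2 ^ (K + 1) - 1 := by
    have h1 : 4 ≤ 2 ^ (K + 1) := by
      calc (4 : ℕ) = 2 ^ 2 := by norm_num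
      _ ≤ 2 ^ (K + 1) := Nat.pow_le_pow_right (by norm_num) (by omega)
    have h2 : 2 * 2 ^ K = 2 ^ (K + 1) := by ring
    have h3 : 2 ≤ 2 ^ K := by
      calc (2 : ℕ) = 2 ^ 1 := by norm_num
      _ ≤ 2 ^ K := Nat.pow_le_pow_right (by norm_num) hK
    omega
  rcases Nat.eq_zero_or_pos (i : ℕ) with h0 | h0
  · -- root: neighbours are the other root and the two children
    have hc1 : 1 < 2 ^ (K + 1) - 1 := by omega
    have hc2 : 2 < 2 ^ (K + 1) - 1 := by omega
    refine key G hcubic f hinj hhom (t, i)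
      {(!t, i), (t, ⟨1, hc1⟩), (t, ⟨2, hc2⟩)} ?_ ?_ x hx
    · intro b hb
      simp only [Finset.mem_insert, Finset.mem_singleton] at hb
      rcases hb with rfl | rfl | rfl
      · exact adj_cross t i i h0 h0
      · exact adj_child t i _ (by simp [h0])
      · exact adj_child t i _ (by simp [h0])
    · rw [Finset.card_insert_of_notMem, Finset.card_insert_of_notMem]
      · simp
      · simp only [Finset.mem_singleton, Prod.mk.injEq, not_and]
        intro _ h
        have := congrArg Fin.val h
        simp at this
      · simp only [Finset.mem_insert, Finset.mem_singleton, Prod.mk.injEq, not_or, not_and]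
        constructor
        · intro h; exact absurd h (Bool.not_ne_self t)
        · intro _ h
          have := congrArg Fin.val h
          simp [h0] at this
  · -- internal vertex: neighbours are the parent and the two children
    set m := (i : ℕ) with hm
    have hp : (m + 1) / 2 - 1 < 2 ^ (K + 1) - 1 := by
      have : (m + 1) / 2 ≤ m + 1 := Nat.div_le_self _ _
      have : m < 2 ^ (K + 1) - 1 := i.isLt
      omega
    have hch1 : 2 * m + 1 < 2 ^ (K + 1) - 1 := by
      have h2 : 2 * 2 ^ K ≤ 2 ^ (K + 1) := by omega
      omega
    have hch2 : 2 * m + 2 < 2 ^ (K + 1) - 1 := by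
      have h2 : 2 * 2 ^ K ≤ 2 ^ (K + 1) := by omega
      omega
    have hpar : m + 1 = 2 * ((m + 1) / 2 - 1 + 1) ∨
        m + 1 = 2 * ((m + 1) / 2 - 1 + 1) + 1 := by
      have h2 : 2 ≤ m + 1 := by omega
      have := Nat.div_add_mod (m + 1) 2
      have hq : 1 ≤ (m + 1) / 2 := Nat.one_le_div_iff (by norm_num) |>.2 h2
      have := Nat.mod_two_eq_zero_or_one (m + 1)
      omega
    refine key G hcubic f hinj hhom (t, i)
      {(t, ⟨(m + 1) / 2 - 1, hp⟩), (t, ⟨2 * m + 1, hch1⟩), (t, ⟨2 * m + 2, hch2⟩)}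
      ?_ ?_ x hx
    · intro b hb
      simp only [Finset.mem_insert, Finset.mem_singleton] at hb
      rcases hb with rfl | rfl | rfl
      · exact adj_parent t i _ (by simpa using hpar)
      · exact adj_child t i _ (by simp; omega)
      · exact adj_child t i _ (by simp; omega)
    · have hplt : (m + 1) / 2 - 1 < 2 * m + 1 := by
        have : (m + 1) / 2 ≤ m + 1 := Nat.div_le_self _ _
        omega
      rw [Finset.card_insert_of_notMem, Finset.card_insert_of_notMem]
      · simp
      · simp only [Finset.mem_singleton, Prod.mk.injEq, not_and]
        intro _ h
        rw [Fin.mk.injEq] at h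
        omega
      · simp only [Finset.mem_insert, Finset.mem_singleton, Prod.mk.injEq, not_or, not_and]
        constructor
        · intro _ h
          rw [Fin.mk.injEq] at h
          omega
        · intro _ h
          rw [Fin.mk.injEq] at h
          omega

end TKAux

open TKAux in
/-- If a cubic graph `G` contains `T_K` (two perfect binary trees of height `K` joined
at the roots by an edge) as a subgraph, then `G` has two vertices at distance at least
`K`; hence its diameter is at least `K`. -/
theorem cubic_TK_subgraph_diam_ge (K n : ℕ) (hK : 1 ≤ K)
    (G : SimpleGraph (Fin n)) (hcubic : ∀ v, G.degree v = 3)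
    (f : Bool × Fin (2 ^ (K + 1) - 1) → Fin n) (hinj : Function.Injective f)
    (hhom : ∀ a b, (TK K).Adj a b → G.Adj (f a) (f b)) :
    (∃ u v : Fin n, (K : ℕ∞) ≤ G.edist u v) ∧ (K : ℕ∞) ≤ G.ediam := by
  have hN : 2 ^ K - 1 < 2 ^ (K + 1) - 1 := by
    have h2 : 2 * 2 ^ K = 2 ^ (K + 1) := by ring
    have h3 : 1 ≤ 2 ^ K := Nat.one_le_two_pow
    omega
  have hroot : (0 : ℕ) < 2 ^ (K + 1) - 1 := two_pow_succ_sub_one_pos K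
  set root : Fin (2 ^ (K + 1) - 1) := ⟨0, hroot⟩
  set leaf : Fin (2 ^ (K + 1) - 1) := ⟨2 ^ K - 1, hN⟩
  -- every short walk to the root image ends at the image of a vertex of small depth
  have main : ∀ (x w : Fin n) (p : G.Walk x w), w = f (false, root) → p.length < K →
      ∃ t i, x = f (t, i) ∧ Nat.log2 ((i : ℕ) + 1) ≤ p.length := by
    intro x w p
    induction p with
    | nil => intro hw _; exact ⟨false, root, hw, by simp [root, log2_one]⟩
    | @cons x y _ h q ih =>
      intro hw hlen
      simp only [SimpleGraph.Walk.length_cons] at hlen ⊢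
      obtain ⟨t, i, rfl, hd⟩ := ih hw (by omega)
      have hilt : (i : ℕ) + 1 < 2 ^ K := by
        have : Nat.log2 ((i : ℕ) + 1) < K := by omega
        exact (Nat.log2_lt (by omega)).1 this
      obtain ⟨b, hadj, rfl⟩ :=
        neighbor_of_adj hK G hcubic f hinj hhom t i hilt x h.symm
      refine ⟨b.1, b.2, by simp, ?_⟩
      have hds : Nat.log2 ((b.2 : ℕ) + 1) ≤ Nat.log2 ((i : ℕ) + 1) + 1 := depth_succ hadj
      omega
  have hdist : (K : ℕ∞) ≤ G.edist (f (false, root)) (f (false, leaf)) := by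
    rw [SimpleGraph.edist]
    refine le_iInf fun p => ?_
    by_contra hlt
    push_neg at hlt
    have hplen : p.length < K := by exact_mod_cast hlt
    have hrev : p.reverse.length < K := by simpa using hplen
    obtain ⟨t, i, hvf, hd⟩ := main _ _ p.reverse rfl hrev
    have heq : (false, leaf) = (t, i) := hinj hvf
    have hil : leaf = i := congrArg Prod.snd heq
    have hiv : (i : ℕ) = 2 ^ K - 1 := by rw [← hil]
    have h1 : 1 ≤ 2 ^ K := Nat.one_le_two_pow
    rw [hiv, show 2 ^ K - 1 + 1 = 2 ^ K by omega, Nat.log2_two_pow] at hd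
    have : p.reverse.length < K := hrev
    omega
  exact ⟨⟨_, _, hdist⟩, le_trans hdist SimpleGraph.edist_le_ediam⟩
end

section
/- For the eigenvalue problem μv₁ = 2v₁ + 2(v₁ − v₂), μv_j = v_j − v_{j−1} + 2(v_j − v_{j+1}) for 2 ≤ j ≤ K−1, and μv_K = v_K − v_{K−1} + 4v_K, the smallest eigenvalue μ satisfies μ = 3 − 2√2·cos(π/K). -/
noncomputable def gfun (θ : ℝ) : ℝ → ℝ :=
  fun x => Real.sin θ * Real.cos x - (Real.sqrt 2 + Real.cos θ) * Real.sin x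

lemma gfun_cheb (θ x : ℝ) :
    gfun θ (x + θ) + gfun θ (x - θ) = 2 * Real.cos θ * gfun θ x := by
  simp only [gfun, Real.cos_add, Real.cos_sub, Real.sin_add, Real.sin_sub]; ring

lemma sin_ge_sin (a x : ℝ) (ha : 0 ≤ a) (h1 : a ≤ x) (h2 : x ≤ Real.pi - a) :
    Real.sin a ≤ Real.sin x := by
  have hapi : a ≤ Real.pi / 2 := by nlinarith [h1.trans h2]
  rcases le_total x (Real.pi / 2) with hx | hx
  · exact Real.strictMonoOn_sin.monotoneOn ⟨by linarith, hapi⟩ ⟨by linarith, hx⟩ h1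
  · rw [← Real.sin_pi_sub x]
    exact Real.strictMonoOn_sin.monotoneOn ⟨by linarith, hapi⟩
      ⟨by linarith [Real.pi_pos], by linarith⟩ (by linarith)

lemma key_ind (μ μ₁ s : ℝ) (u w : ℕ → ℝ) (N : ℕ)
    (hu : ∀ j, 1 ≤ j → j ≤ N + 1 → u j ≠ 0)
    (hW1 : μ * w 1 = 4 * w 1 - s * w 2)
    (hU1 : μ₁ * u 1 = 4 * u 1 - s * u 2)
    (hWint : ∀ m, m + 2 ≤ N → μ * w (m+2) = 3 * w (m+2) - s * w (m+1) - s * w (m+3))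
    (hUint : ∀ m, μ₁ * u (m+2) = 3 * u (m+2) - s * u (m+1) - s * u (m+3)) :
    ∀ m, m + 1 ≤ N → (μ - μ₁) * (∑ j ∈ Finset.range (m+1), (w (j+1))^2)
      = (∑ j ∈ Finset.range m, s * (u (j+2) * w (j+1) - u (j+1) * w (j+2))^2 / (u (j+1) * u (j+2)))
        + s * (u (m+2) * w (m+1) - u (m+1) * w (m+2)) * w (m+1) / u (m+1) := by
  intro m
  induction m with
  | zero =>
    intro h
    simp only [Finset.sum_range_one, Finset.sum_range_zero, zero_add]
    have hu1 : u 1 ≠ 0 := hu 1 le_rfl (by omega)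
    field_simp
    linear_combination (w 1 * u 1) * hW1 - (w 1)^2 * hU1
  | succ m ih =>
    intro h
    have ih' := ih (by omega)
    conv_rhs => rw [Finset.sum_range_succ]
    rw [Finset.sum_range_succ _ (m+1), mul_add, ih']
    have hu1 : u (m+1) ≠ 0 := hu (m+1) (by omega) (by omega)
    have hu2 : u (m+2) ≠ 0 := hu (m+2) (by omega) (by omega)
    have hw := hWint m (by omega)
    have hU := hUint m
    simp only [show m+1+1 = m+2 from rfl, show m+1+2 = m+3 from rfl]
    field_simp
    linear_combination (u (m+1) * u (m+2) * w (m+2)) * hw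
      - (u (m+1) * (w (m+2))^2) * hU

/-- **Smallest eigenvalue of the tridiagonal system.** For the eigenvalue problem
`μv₁ = 2v₁ + 2(v₁ - v₂)`, `μv_j = v_j - v_{j-1} + 2(v_j - v_{j+1})` for `2 ≤ j ≤ K-1`,
`μv_K = v_K - v_{K-1} + 4v_K`, the smallest eigenvalue is `μ = 3 - 2√2·cos(π/K)`. -/
theorem smallest_eigenvalue_tridiagonal (K : ℕ) (hK : 2 ≤ K) :
    IsLeast {μ : ℝ | ∃ v : ℕ → ℝ,
        (∃ j, 1 ≤ j ∧ j ≤ K ∧ v j ≠ 0) ∧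
        μ * v 1 = 2 * v 1 + 2 * (v 1 - v 2) ∧
        (∀ j, 2 ≤ j → j ≤ K - 1 →
          μ * v j = v j - v (j - 1) + 2 * (v j - v (j + 1))) ∧
        μ * v K = v K - v (K - 1) + 4 * v K}
      (3 - 2 * Real.sqrt 2 * Real.cos (Real.pi / K)) := by
  have hK0 : (0:ℝ) < K := by positivity
  set θ : ℝ := Real.pi / K with hθdef
  set s : ℝ := Real.sqrt 2 with hsdef
  set c : ℝ := Real.cos θ with hcdef
  have hs2 : s ^ 2 = 2 := Real.sq_sqrt (by norm_num)
  have hs0 : 0 < s := Real.sqrt_pos.mpr (by norm_num)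
  have hsne : s ≠ 0 := ne_of_gt hs0
  have hθpos : 0 < θ := by positivity
  have hθle : θ ≤ Real.pi / 2 := by
    have h2K : (2:ℝ) ≤ (K:ℝ) := by exact_mod_cast hK
    rw [hθdef]
    gcongr
  have hsin : 0 < Real.sin θ := Real.sin_pos_of_pos_of_lt_pi hθpos
    (lt_of_le_of_lt hθle (by linarith [Real.pi_pos]))
  have hKθ : (K:ℝ) * θ = Real.pi := by
    rw [hθdef]; field_simp
  have hc1 : ((1:ℕ):ℝ) * θ = θ := by push_cast; ring
  have hc2 : ((2:ℕ):ℝ) * θ = θ + θ := by push_cast; ring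
  have h1 : gfun θ θ = -(s * Real.sin θ) := by simp only [gfun]; ring
  have h2 : gfun θ (θ + θ) = 2 * c * (-(s * Real.sin θ)) - Real.sin θ := by
    have h := gfun_cheb θ θ
    rw [show θ - θ = 0 by ring] at h
    have h0 : gfun θ 0 = Real.sin θ := by simp [gfun]
    rw [h0, h1] at h
    linarith
  have hgK : gfun θ ((K:ℝ) * θ) = -Real.sin θ := by
    rw [hKθ]; simp [gfun]
  have hcast : ((K - 1 : ℕ) : ℝ) = (K:ℝ) - 1 := by
    have h1K : (1:ℕ) ≤ K := by omega
    push_cast [h1K]; ring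
  have hgK1 : gfun θ (((K - 1:ℕ)) * θ) = -((s + 2*c) * Real.sin θ) := by
    rw [hcast, show ((K:ℝ) - 1) * θ = Real.pi - θ by rw [← hKθ]; ring]
    simp only [gfun, Real.cos_pi_sub, Real.sin_pi_sub]
    ring
  constructor
  · -- membership
    refine ⟨fun j => gfun θ (j * θ) / s ^ j, ⟨1, le_refl _, by omega, ?_⟩, ?_, ?_, ?_⟩
    · simp only [hc1, h1, pow_one]
      rw [div_ne_zero_iff]
      exact ⟨by nlinarith, hsne⟩
    · simp only [hc1, hc2, h1, h2]
      field_simp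
      linear_combination (1 + 2*s*c) * hs2
    · intro j hj2 hjK
      obtain ⟨m, rfl⟩ : ∃ m, j = m + 2 := ⟨j - 2, by omega⟩
      have hch : gfun θ (((m:ℝ) + 3) * θ)
          = 2 * c * gfun θ (((m:ℝ) + 2) * θ) - gfun θ (((m:ℝ) + 1) * θ) := by
        have h := gfun_cheb θ (((m:ℝ) + 2) * θ)
        rw [show ((m:ℝ)+2)*θ + θ = ((m:ℝ)+3)*θ by ring,
            show ((m:ℝ)+2)*θ - θ = ((m:ℝ)+1)*θ by ring] at h
        linarith
      simp only [show m + 2 - 1 = m + 1 from rfl]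
      push_cast
      rw [show ((m:ℝ) + 2 + 1) = ((m:ℝ)+3) by ring, hch]
      rw [show m+2+1 = m+3 from rfl]
      rw [pow_succ s (m+2), pow_succ s (m+1)]
      set A := gfun θ (((m:ℝ) + 1) * θ)
      set B := gfun θ (((m:ℝ) + 2) * θ)
      have htne : s^(m+1) ≠ 0 := pow_ne_zero _ hsne
      field_simp
      linear_combination (A - 2*c*B) * hs2
    · have hsK : s ^ K = s ^ (K-1) * s := by
        rw [← pow_succ]; congr 1; omega
      simp only [hgK, hgK1, hsK]
      have htne : s^(K-1) ≠ 0 := pow_ne_zero _ hsne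
      field_simp
      linear_combination (-1) * hs2
  · -- lower bound
    rintro μ ⟨v, ⟨j₀, hj₀1, hj₀K, hv0⟩, e1, eint, eK⟩
    obtain ⟨L, rfl⟩ : ∃ L, K = L + 2 := ⟨K - 2, by omega⟩
    have hKm1 : L + 2 - 1 = L + 1 := rfl
    simp only [hKm1] at eint eK
    set μ₁ : ℝ := 3 - 2 * s * c with hμ₁def
    set u : ℕ → ℝ := fun j => -(gfun θ (j * θ)) with hudef
    set w : ℕ → ℝ := fun j => s ^ j * v j with hwdef
    -- values of u
    have hu1v : u 1 = s * Real.sin θ := by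
      simp only [hudef, hc1, h1]; ring
    have hu2v : u 2 = 2 * c * (s * Real.sin θ) + Real.sin θ := by
      simp only [hudef, hc2, h2]; ring
    have huKv : u (L+2) = Real.sin θ := by
      simp only [hudef]
      rw [show (((L+2:ℕ)):ℝ) * θ = (((L+2:ℕ)):ℝ) * θ from rfl, hgK]; ring
    have huK1v : u (L+1) = (s + 2*c) * Real.sin θ := by
      simp only [hudef]
      rw [show (((L+1:ℕ)):ℝ) = (((L+2-1:ℕ)):ℝ) from rfl, hgK1]; ring
    -- chebyshev for u
    have hucheb : ∀ m : ℕ, u (m+3) = 2 * c * u (m+2) - u (m+1) := by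
      intro m
      simp only [hudef]
      have h := gfun_cheb θ (((m:ℝ) + 2) * θ)
      rw [show ((m:ℝ)+2)*θ + θ = ((m:ℝ)+3)*θ by ring,
          show ((m:ℝ)+2)*θ - θ = ((m:ℝ)+1)*θ by ring] at h
      push_cast
      linarith
    -- eigen equations for u
    have hU1 : μ₁ * u 1 = 4 * u 1 - s * u 2 := by
      rw [hu1v, hu2v, hμ₁def]; ring
    have hUint : ∀ m : ℕ, μ₁ * u (m+2) = 3 * u (m+2) - s * u (m+1) - s * u (m+3) := by
      intro m; rw [hucheb m, hμ₁def]; ring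
    have hUK : μ₁ * u (L+2) = 5 * u (L+2) - s * u (L+1) := by
      rw [huKv, huK1v, hμ₁def]; linear_combination (Real.sin θ) * hs2
    -- positivity of u
    have hupos : ∀ j, 1 ≤ j → j ≤ L + 2 → 0 < u j := by
      intro j hj1 hj2
      rcases eq_or_lt_of_le hj2 with rfl | hj2'
      · rw [huKv]; exact hsin
      · have hjle : j ≤ L + 1 := by omega
        have hj1R : (1:ℝ) ≤ (j:ℝ) := by exact_mod_cast hj1
        have hx1 : θ ≤ (j:ℝ) * θ := le_mul_of_one_le_left hθpos.le hj1R
        have hx2 : (j:ℝ) * θ ≤ Real.pi - θ := by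
          have hjR : (j:ℝ) ≤ (L:ℝ) + 1 := by exact_mod_cast hjle
          have h4 : (j:ℝ)*θ ≤ ((L:ℝ)+1)*θ := mul_le_mul_of_nonneg_right hjR hθpos.le
          have h5 : ((L:ℝ)+1)*θ = Real.pi - θ := by rw [← hKθ]; push_cast; ring
          linarith
        have hs' : Real.sin θ ≤ Real.sin ((j:ℝ)*θ) := sin_ge_sin θ _ hθpos.le hx1 hx2
        have hSj : 0 < Real.sin ((j:ℝ)*θ) := lt_of_lt_of_le hsin hs'
        have hcos : Real.cos ((j:ℝ)*θ) ≤ 1 := Real.cos_le_one _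
        have hc0 : 0 ≤ c := by
          rw [hcdef]
          exact Real.cos_nonneg_of_mem_Icc ⟨by linarith, hθle⟩
        have hs1 : 1 < s := by
          rw [hsdef, show (1:ℝ) = Real.sqrt 1 by simp]
          exact Real.sqrt_lt_sqrt (by norm_num) (by norm_num)
        have hmain : Real.sin θ * Real.cos ((j:ℝ)*θ)
            < (Real.sqrt 2 + Real.cos θ) * Real.sin ((j:ℝ)*θ) := by
          have e1' : Real.sin θ * Real.cos ((j:ℝ)*θ) ≤ Real.sin θ :=
            mul_le_of_le_one_right hsin.le hcos
          have h1s : (1:ℝ) < Real.sqrt 2 + Real.cos θ := by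
            rw [← hsdef, ← hcdef]; linarith
          have h2s := (lt_mul_iff_one_lt_left hSj).mpr h1s
          linarith
        simp only [hudef, gfun]
        linarith [hmain]
    -- eigen equations for w
    have hW1 : μ * w 1 = 4 * w 1 - s * w 2 := by
      simp only [hwdef]
      linear_combination s * e1 + (s * v 2) * hs2
    have hWint : ∀ m, m + 2 ≤ L + 1 →
        μ * w (m+2) = 3 * w (m+2) - s * w (m+1) - s * w (m+3) := by
      intro m hm
      have h := eint (m+2) (by omega) (by omega)
      simp only [show m+2-1 = m+1 from rfl] at h
      simp only [hwdef]
      linear_combination (s^(m+2)) * h + (s^(m+2) * v (m+3)) * hs2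
    have hWK : μ * w (L+2) = 5 * w (L+2) - s * w (L+1) := by
      simp only [hwdef]
      linear_combination (s^(L+2)) * eK
    clear_value u w
    -- key identity
    have hune : ∀ j, 1 ≤ j → j ≤ (L+1) + 1 → u j ≠ 0 :=
      fun j h1 h2 => ne_of_gt (hupos j h1 h2)
    have hkey := key_ind μ μ₁ s u w (L+1) hune hW1 hU1 hWint hUint L le_rfl
    have huL1 : u (L+1) ≠ 0 := hune (L+1) (by omega) (by omega)
    have huL2 : u (L+2) ≠ 0 := hune (L+2) (by omega) (by omega)
    have hlast : (μ - μ₁) * (w (L+2))^2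
        + s * (u (L+2) * w (L+1) - u (L+1) * w (L+2)) * w (L+1) / u (L+1)
        = s * (u (L+2) * w (L+1) - u (L+1) * w (L+2))^2 / (u (L+1) * u (L+2)) := by
      field_simp
      linear_combination (u (L+1) * u (L+2) * w (L+2)) * hWK
        - (u (L+1) * (w (L+2))^2) * hUK
    have htot : (μ - μ₁) * (∑ j ∈ Finset.range (L+2), (w (j+1))^2)
        = (∑ j ∈ Finset.range L, s * (u (j+2) * w (j+1) - u (j+1) * w (j+2))^2 / (u (j+1) * u (j+2)))
          + s * (u (L+2) * w (L+1) - u (L+1) * w (L+2))^2 / (u (L+1) * u (L+2)) := by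
      rw [Finset.sum_range_succ, mul_add, hkey]
      rw [show L+1+1 = L+2 from rfl]
      linarith [hlast]
    have hrhs : 0 ≤ (∑ j ∈ Finset.range L, s * (u (j+2) * w (j+1) - u (j+1) * w (j+2))^2 / (u (j+1) * u (j+2)))
          + s * (u (L+2) * w (L+1) - u (L+1) * w (L+2))^2 / (u (L+1) * u (L+2)) := by
      apply add_nonneg
      · apply Finset.sum_nonneg
        intro j hj
        have hj' := Finset.mem_range.mp hj
        apply div_nonneg (mul_nonneg hs0.le (sq_nonneg _))
        exact mul_nonneg (hupos (j+1) (by omega) (by omega)).le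
          (hupos (j+2) (by omega) (by omega)).le
      · apply div_nonneg (mul_nonneg hs0.le (sq_nonneg _))
        exact mul_nonneg (hupos (L+1) (by omega) (by omega)).le
          (hupos (L+2) (by omega) (by omega)).le
    have hsumpos : 0 < ∑ j ∈ Finset.range (L+2), (w (j+1))^2 := by
      apply Finset.sum_pos' (fun i _ => sq_nonneg _)
      refine ⟨j₀ - 1, Finset.mem_range.mpr (by omega), ?_⟩
      have hj' : j₀ - 1 + 1 = j₀ := by omega
      rw [hj']
      apply pow_two_pos_of_ne_zero
      simp only [hwdef]
      exact mul_ne_zero (pow_ne_zero _ hsne) hv0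
    have h0 : 0 ≤ (μ - μ₁) * (∑ j ∈ Finset.range (L+2), (w (j+1))^2) := by
      rw [htot]; exact hrhs
    have h1' : 0 ≤ μ - μ₁ := (mul_nonneg_iff_of_pos_right hsumpos).mp h0
    linarith
end
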